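/- arXiv:2103.11171 — 7 statements merged into one kernel-verified Lean document; each statement's English description precedes it below -/
import Mathlib

section
/- Let Q = T[H_1, …, H_t] be a strong semicomplete composition such that T does not belong to 𝒯₁. Then every minimal separator S of Q induces in the complement of the underlying graph of Q a subgraph which is the union of some connected components of that complement; moreover, each vertex s ∈ S is adjacent (in the underlying graph of Q) to every vertex of Q − S. -/
universe u v

/-- There is a directed walk of length at most `n` from `x` to `y`. -/
def ReachIn {V : Type u} (A : V → V → Prop) : ℕ → V → V → Prop
  | 0 => fun x y => x = y
  | n + 1 => fun x y => x = y ∨ ∃ z, A x z ∧ ReachIn A n z y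

/-- A digraph is strong if every vertex can reach every other vertex. -/
def IsStrong {V : Type u} (A : V → V → Prop) : Prop :=
  ∀ x y : V, Relation.ReflTransGen A x y

/-- A digraph is loopless if it has no loops. -/
def Loopless {V : Type u} (A : V → V → Prop) : Prop := ∀ x, ¬ A x x

/-- A digraph is semicomplete if there is at least one arc between any two distinct vertices. -/
def Semicomplete {V : Type u} (A : V → V → Prop) : Prop :=
  ∀ x y : V, x ≠ y → A x y ∨ A y x

/-- The subdigraph induced on a set `s` of vertices. -/
def Restrict {V : Type u} (A : V → V → Prop) (s : Set V) :
    {v // v ∈ s} → {v // v ∈ s} → Prop := fun x y => A x.1 y.1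

/-- `S` is a separator: deleting `S` leaves a non-strong digraph. -/
def IsSeparator {V : Type u} (A : V → V → Prop) (S : Set V) : Prop :=
  ¬ IsStrong (Restrict A Sᶜ)

/-- A digraph is `k`-strong-connected if every separator has at least `k` vertices. -/
def KStrong {V : Type u} (A : V → V → Prop) (k : ℕ) : Prop :=
  ∀ S : Set V, IsSeparator A S → k ≤ S.ncard

/-- The composition `T[H₁, …, H_t]`. -/
def Comp {t : ℕ} (T : Fin t → Fin t → Prop) (V : Fin t → Type u)
    (H : ∀ i, V i → V i → Prop) : (Σ i, V i) → (Σ i, V i) → Prop :=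
  fun p q => T p.1 q.1 ∨ ∃ h : p.1 = q.1, H q.1 (h ▸ p.2) q.2

/-- The complement of the underlying (simple) graph of a digraph. -/
def complUnderlying {V : Type u} (A : V → V → Prop) : SimpleGraph V where
  Adj x y := x ≠ y ∧ ¬ A x y ∧ ¬ A y x
  symm := ⟨fun x y ⟨h1, h2, h3⟩ => ⟨h1.symm, h3, h2⟩⟩
  loopless := ⟨fun x h => h.1 rfl⟩

/-- `x` is a `k`-king: it reaches every vertex by a path of length at most `k`. -/
def IsKKing {V : Type u} (A : V → V → Prop) (k : ℕ) (x : V) : Prop :=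
  ∀ y, ReachIn A k x y

/-- A (directed) path given as a list of vertices. -/
def IsPathList {V : Type u} (A : V → V → Prop) (l : List V) : Prop :=
  l.Nodup ∧ l.Chain' A

/-- A (directed) cycle given as a list of distinct vertices. -/
def IsCycleList {V : Type u} (A : V → V → Prop) (l : List V) : Prop :=
  2 ≤ l.length ∧ l.Nodup ∧ l.Chain' A ∧
    ∀ x ∈ l.getLast?, ∀ y ∈ l.head?, A x y


/-! ### Auxiliary lemmas -/

/-- The restriction of a relation to a set, as a relation on the ambient type. -/
def rrRel {α : Type u} (r : α → α → Prop) (P : Set α) : α → α → Prop :=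
  fun a b => a ∈ P ∧ b ∈ P ∧ r a b

lemma rtg_toSub {α : Type u} (r : α → α → Prop) (P : Set α) {p q : α}
    (h : Relation.ReflTransGen (rrRel r P) p q) :
    ∀ (hp : p ∈ P) (hq : q ∈ P),
      Relation.ReflTransGen (Restrict r P) ⟨p, hp⟩ ⟨q, hq⟩ := by
  induction h with
  | refl => intro hp hq; exact Relation.ReflTransGen.refl
  | tail h1 h2 ih => intro hp hq; exact (ih hp h2.1).tail h2.2.2

lemma rtg_ofSub {α : Type u} (r : α → α → Prop) (P : Set α) {pp qq : {v // v ∈ P}}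
    (h : Relation.ReflTransGen (Restrict r P) pp qq) :
    Relation.ReflTransGen (rrRel r P) pp.1 qq.1 := by
  induction h with
  | refl => exact Relation.ReflTransGen.refl
  | @tail b c h1 h2 ih => exact ih.tail ⟨b.2, c.2, h2⟩

lemma rtg_closed {α : Type u} {rel : α → α → Prop} (C : Set α)
    (hcl : ∀ a ∈ C, ∀ b, rel a b → b ∈ C) {p q : α}
    (h : Relation.ReflTransGen rel p q) (hp : p ∈ C) : q ∈ C := by
  induction h with
  | refl => exact hp
  | tail h1 h2 ih => exact hcl _ ih _ h2

lemma notsep_rtg {α : Type u} (A : α → α → Prop) (P : Set α)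
    (h : ¬ IsSeparator A P) {p q : α} (hp : p ∈ Pᶜ) (hq : q ∈ Pᶜ) :
    Relation.ReflTransGen (rrRel A Pᶜ) p q :=
  rtg_ofSub A Pᶜ (not_not.mp h ⟨p, hp⟩ ⟨q, hq⟩)

lemma sep_exists {α : Type u} (A : α → α → Prop) (P : Set α)
    (h : IsSeparator A P) :
    ∃ p q, p ∈ Pᶜ ∧ q ∈ Pᶜ ∧ ¬ Relation.ReflTransGen (rrRel A Pᶜ) p q := by
  unfold IsSeparator IsStrong at h
  push_neg at h
  obtain ⟨pp, qq, hn⟩ := h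
  exact ⟨pp.1, qq.1, pp.2, qq.2, fun hr => hn (rtg_toSub A Pᶜ hr pp.2 qq.2)⟩

lemma comp_loopless {t : ℕ} {T : Fin t → Fin t → Prop} {V : Fin t → Type u}
    {H : ∀ i, V i → V i → Prop} (hTl : Loopless T) (hHl : ∀ i, Loopless (H i)) :
    Loopless (Comp T V H) := by
  rintro ⟨i, a⟩ (h | ⟨h, hH⟩)
  · exact hTl i h
  · exact hHl i a hH

lemma comp_diff {t : ℕ} {T : Fin t → Fin t → Prop} {V : Fin t → Type u}
    {H : ∀ i, V i → V i → Prop} {p q : Σ i, V i} (h : p.1 ≠ q.1)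
    (hpq : Comp T V H p q) : T p.1 q.1 := by
  rcases hpq with ht | ⟨he, _⟩
  · exact ht
  · exact absurd he h

/-- Splitting a walk in `Q - (S \ {s})` at its first visit to `s`. -/
lemma aux_L1 {α : Type u} (r : α → α → Prop) (S : Set α) (s : α) {q : α}
    (hq : q ∉ S) : ∀ {p}, p ∉ S →
    Relation.ReflTransGen (rrRel r (S \ {s})ᶜ) p q →
    Relation.ReflTransGen (rrRel r Sᶜ) p q ∨
      ∃ a, a ∉ S ∧ Relation.ReflTransGen (rrRel r Sᶜ) p a ∧ r a s := by
  intro p hp h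
  revert hp
  induction h using Relation.ReflTransGen.head_induction_on with
  | refl => intro _; exact Or.inl Relation.ReflTransGen.refl
  | @head a c h' hcb ih =>
    intro haS
    by_cases hcS : c ∈ S
    · have hcs : c = s := by
        by_contra hne
        exact h'.2.1 ⟨hcS, hne⟩
      exact Or.inr ⟨a, haS, Relation.ReflTransGen.refl, hcs ▸ h'.2.2⟩
    · rcases ih hcS with hL | ⟨a', ha', hrt, has⟩
      · exact Or.inl (hL.head ⟨haS, hcS, h'.2.2⟩)
      · exact Or.inr ⟨a', ha', hrt.head ⟨haS, hcS, h'.2.2⟩, has⟩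

/-- Splitting a walk in `Q - (S \ {s})` at its last visit to `s`. -/
lemma aux_L2 {α : Type u} (r : α → α → Prop) (S : Set α) (s : α)
    (hs : s ∈ S) (hloop : ¬ r s s) {q : α} (hq : q ∉ S) : ∀ {p},
    Relation.ReflTransGen (rrRel r (S \ {s})ᶜ) p q →
    (p ∉ S → (Relation.ReflTransGen (rrRel r Sᶜ) p q ∨
      ∃ b, b ∉ S ∧ r s b ∧ Relation.ReflTransGen (rrRel r Sᶜ) b q)) ∧
    (p = s → ∃ b, b ∉ S ∧ r s b ∧ Relation.ReflTransGen (rrRel r Sᶜ) b q) := by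
  intro p h
  induction h using Relation.ReflTransGen.head_induction_on with
  | refl =>
    refine ⟨fun _ => Or.inl Relation.ReflTransGen.refl, fun hqs => ?_⟩
    exact absurd hs (hqs ▸ hq)
  | @head a c h' hcb ih =>
    constructor
    · intro haS
      by_cases hcS : c ∈ S
      · have hcs : c = s := by
          by_contra hne
          exact h'.2.1 ⟨hcS, hne⟩
        exact Or.inr (ih.2 hcs)
      · rcases ih.1 hcS with hL | hE
        · exact Or.inl (hL.head ⟨haS, hcS, h'.2.2⟩)
        · exact Or.inr hE
    · intro has
      have rac : r s c := has ▸ h'.2.2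
      have hcs : c ≠ s := fun h => hloop (h ▸ rac)
      have hcS : c ∉ S := fun h => h'.2.1 ⟨h, hcs⟩
      rcases ih.1 hcS with hL | hE
      · exact ⟨c, hcS, rac, hL⟩
      · exact hE

/-- The core contradiction: in a semicomplete composition with `T ∉ 𝒯₁`, a minimal
separator cannot contain a vertex `s` whose house also contains a vertex outside `S`. -/
lemma core_lemma {t : ℕ} (V : Fin t → Type u) [∀ i, Nonempty (V i)]
    (T : Fin t → Fin t → Prop) (H : ∀ i, V i → V i → Prop)
    (hTl : Loopless T) (hHl : ∀ i, Loopless (H i)) (hsc : Semicomplete T)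
    (hT1 : ¬ ∃ u : Fin t, ∀ v, v ≠ u → T u v ∧ T v u)
    (S : Set (Σ i, V i)) (hsep : IsSeparator (Comp T V H) S)
    (hmin : ∀ S' : Set (Σ i, V i), S' ⊂ S → ¬ IsSeparator (Comp T V H) S')
    (s v : Σ i, V i) (hs : s ∈ S) (hv : v ∉ S) (hvi : v.1 = s.1) : False := by
  classical
  set A := Comp T V H with hA
  have hAloop : Loopless A := comp_loopless hTl hHl
  obtain ⟨x, y, hx, hy, hxy⟩ := sep_exists A S hsep
  have hss : S \ {s} ⊂ S := ⟨Set.diff_subset, fun h => (h hs).2 rfl⟩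
  have hQ' : ∀ {p q : Σ i, V i}, p ∈ (S \ {s})ᶜ → q ∈ (S \ {s})ᶜ →
      Relation.ReflTransGen (rrRel A (S \ {s})ᶜ) p q :=
    fun hp hq => notsep_rtg A (S \ {s}) (hmin _ hss) hp hq
  have hPmem : ∀ {z : Σ i, V i}, z ∉ S → z ∈ (S \ {s})ᶜ := fun h hm => h hm.1
  -- split the walk from x to y at s
  have hxy' := hQ' (hPmem hx) (hPmem hy)
  have hL1 := aux_L1 A S s hy hx hxy'
  rcases hL1 with h | ⟨a, haS, hxa, has⟩
  · exact hxy h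
  have hL2 := (aux_L2 A S s hs (hAloop s) hy hxy').1 hx
  rcases hL2 with h | ⟨b, hbS, hsb, hby⟩
  · exact hxy h
  have hbnr : ¬ Relation.ReflTransGen (rrRel A Sᶜ) x b := fun h => hxy (h.trans hby)
  have hend : ∀ {z : Σ i, V i}, Relation.ReflTransGen (rrRel A Sᶜ) x z → z ∈ Sᶜ :=
    fun hz => rtg_closed Sᶜ (fun _ _ _ st => st.2.1) hz hx
  have hMcl : ∀ {z q : Σ i, V i}, Relation.ReflTransGen (rrRel A Sᶜ) x z →
      q ∉ S → A z q → Relation.ReflTransGen (rrRel A Sᶜ) x q :=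
    fun hz hq haz => hz.tail ⟨hend hz, hq, haz⟩
  -- key facts
  suffices hK : (a.1 = s.1) ∧ (b.1 = s.1) ∧
      (∀ z : Σ i, V i, Relation.ReflTransGen (rrRel A Sᶜ) x z → z.1 ≠ s.1 → ¬ T z.1 s.1) ∧
      (∀ z : Σ i, V i, z ∉ S → ¬ Relation.ReflTransGen (rrRel A Sᶜ) x z →
        z.1 ≠ s.1 → ¬ T s.1 z.1) by
    obtain ⟨K1, K2, K3, K4⟩ := hK
    -- K5 : everything reachable from x is in house s.1
    have K5 : ∀ z : Σ i, V i, Relation.ReflTransGen (rrRel A Sᶜ) x z → z.1 = s.1 := by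
      intro z hz
      by_contra hzi
      have hC : b ∈ {w : Σ i, V i |
          Relation.ReflTransGen (rrRel A Sᶜ) x w ∧ w.1 ≠ s.1} := by
        refine rtg_closed _ ?_ (hQ' (hPmem (hend hz)) (hPmem hbS)) ⟨hz, hzi⟩
        intro w hw q st
        have hwS : w ∉ S := hend hw.1
        by_cases hqs : q = s
        · exact absurd (comp_diff hw.2 (hqs ▸ st.2.2)) (K3 w hw.1 hw.2)
        · have hqS : q ∉ S := fun hq => st.2.1 ⟨hq, hqs⟩
          refine ⟨hMcl hw.1 hqS st.2.2, fun hqi => ?_⟩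
          exact K3 w hw.1 hw.2 (hqi ▸ comp_diff (fun h => hw.2 (h.trans hqi)) st.2.2)
      exact hbnr hC.1
    -- K7 : everything outside S is in house s.1
    have K7 : ∀ z : Σ i, V i, z ∉ S → z.1 = s.1 := by
      intro z hzS
      by_cases hz : Relation.ReflTransGen (rrRel A Sᶜ) x z
      · exact K5 z hz
      by_contra hzi
      have hC' : z ∈ {w : Σ i, V i | w = s ∨ (w ∉ S ∧ w.1 = s.1)} := by
        refine rtg_closed _ ?_ (hQ' (hPmem haS) (hPmem hzS)) (Or.inr ⟨haS, K1⟩)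
        intro w hw q st
        by_cases hqs : q = s
        · exact Or.inl hqs
        have hqS : q ∉ S := fun h => st.2.1 ⟨h, hqs⟩
        refine Or.inr ⟨hqS, ?_⟩
        by_contra hqi
        have hw1 : w.1 = s.1 := by
          rcases hw with rfl | ⟨_, h⟩
          · rfl
          · exact h
        have hwq : w.1 ≠ q.1 := by rw [hw1]; exact fun h => hqi h.symm
        have hT : T s.1 q.1 := by
          have := comp_diff hwq st.2.2
          rwa [hw1] at this
        by_cases hqR : Relation.ReflTransGen (rrRel A Sᶜ) x q
        · exact hqi (K5 q hqR)
        · exact K4 q hqS hqR hqi hT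
      rcases hC' with rfl | ⟨_, h⟩
      · exact hzS hs
      · exact hzi h
    -- final step : T ∈ 𝒯₁, contradiction
    push_neg at hT1
    obtain ⟨j, hji, hjd⟩ := hT1 s.1
    have wj : V j := Classical.arbitrary _
    set w : Σ i, V i := ⟨j, wj⟩ with hw
    have hwS : w ∈ S := by
      by_contra h
      exact hji (K7 w h)
    have hssw : S \ {w} ⊂ S := ⟨Set.diff_subset, fun h => (h hwS).2 rfl⟩
    have hQ'' : ∀ {p q : Σ i, V i}, p ∈ (S \ {w})ᶜ → q ∈ (S \ {w})ᶜ →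
        Relation.ReflTransGen (rrRel A (S \ {w})ᶜ) p q :=
      fun hp hq => notsep_rtg A (S \ {w}) (hmin _ hssw) hp hq
    have hwP : w ∈ (S \ {w})ᶜ := fun hm => hm.2 rfl
    have hxP : x ∈ (S \ {w})ᶜ := fun hm => hx hm.1
    have hx1 : x.1 = s.1 := K7 x hx
    have h1 : T j s.1 := by
      rcases (hQ'' hwP hxP).cases_head with heq | ⟨c, st, _⟩
      · exfalso; rw [← heq] at hx1; exact hji hx1
      · by_cases hcw : c = w
        · exact absurd (hcw ▸ st.2.2) (hAloop w)
        · have hcS : c ∉ S := fun h => st.2.1 ⟨h, hcw⟩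
          have hc1 : c.1 = s.1 := K7 c hcS
          have hwc : w.1 ≠ c.1 := by rw [hc1]; exact hji
          have := comp_diff hwc st.2.2
          rwa [hc1] at this
    have h2 : T s.1 j := by
      rcases (hQ'' hxP hwP).cases_tail with heq | ⟨c, _, st⟩
      · exfalso; rw [← heq] at hx1; exact hji hx1
      · by_cases hcw : c = w
        · exact absurd (hcw ▸ st.2.2) (hAloop w)
        · have hcS : c ∉ S := fun h => st.1 ⟨h, hcw⟩
          have hc1 : c.1 = s.1 := K7 c hcS
          have hcwne : c.1 ≠ w.1 := by rw [hc1]; exact fun h => hji h.symm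
          have := comp_diff hcwne st.2.2
          rwa [hc1] at this
    exact hjd h2 h1
  -- establishing the key facts, by cases on whether v is reachable from x
  by_cases hvR : Relation.ReflTransGen (rrRel A Sᶜ) x v
  · have K2 : b.1 = s.1 := by
      by_contra hbi
      have hsb' : T s.1 b.1 := comp_diff (fun h => hbi h.symm) hsb
      have harc : A v b := Or.inl (show T v.1 b.1 by rw [hvi]; exact hsb')
      exact hbnr (hMcl hvR hbS harc)
    have K3 : ∀ z : Σ i, V i, Relation.ReflTransGen (rrRel A Sᶜ) x z →
        z.1 ≠ s.1 → ¬ T z.1 s.1 := by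
      intro z hz hzi hT
      exact hbnr (hMcl hz hbS (Or.inl (show T z.1 b.1 by rw [K2]; exact hT)))
    have K4 : ∀ z : Σ i, V i, z ∉ S → ¬ Relation.ReflTransGen (rrRel A Sᶜ) x z →
        z.1 ≠ s.1 → ¬ T s.1 z.1 := by
      intro z hzS hznr hzi hT
      exact hznr (hMcl hvR hzS (Or.inl (show T v.1 z.1 by rw [hvi]; exact hT)))
    have K1 : a.1 = s.1 := by
      by_contra hai
      exact K3 a hxa hai (comp_diff hai has)
    exact ⟨K1, K2, K3, K4⟩
  · have K1 : a.1 = s.1 := by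
      by_contra hai
      have hT := comp_diff hai has
      exact hvR (hMcl hxa hv (Or.inl (show T a.1 v.1 by rw [hvi]; exact hT)))
    have K3 : ∀ z : Σ i, V i, Relation.ReflTransGen (rrRel A Sᶜ) x z →
        z.1 ≠ s.1 → ¬ T z.1 s.1 := by
      intro z hz hzi hT
      exact hvR (hMcl hz hv (Or.inl (show T z.1 v.1 by rw [hvi]; exact hT)))
    have K4 : ∀ z : Σ i, V i, z ∉ S → ¬ Relation.ReflTransGen (rrRel A Sᶜ) x z →
        z.1 ≠ s.1 → ¬ T s.1 z.1 := by
      intro z hzS hznr hzi hT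
      exact hznr (hMcl hxa hzS (Or.inl (show T a.1 z.1 by rw [K1]; exact hT)))
    have K2 : b.1 = s.1 := by
      by_contra hbi
      exact K4 b hbS hbnr hbi (comp_diff (fun h => hbi h.symm) hsb)
    exact ⟨K1, K2, K3, K4⟩

/-- In a strong semicomplete composition `Q = T[H₁,…,H_t]` with `T ∉ 𝒯₁`,
every minimal separator `S` induces in the complement of the underlying graph of `Q`
a union of connected components of that complement, and every vertex of `S` is adjacent
(in the underlying graph) to every vertex outside `S`. -/
theorem stmt0 {t : ℕ} (ht : 2 ≤ t) (V : Fin t → Type u) [∀ i, Fintype (V i)]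
    [∀ i, Nonempty (V i)] (T : Fin t → Fin t → Prop) (H : ∀ i, V i → V i → Prop)
    (hTl : Loopless T) (hHl : ∀ i, Loopless (H i)) (hsc : Semicomplete T)
    (hstrong : IsStrong (Comp T V H))
    (hT1 : ¬ ∃ u : Fin t, ∀ v, v ≠ u → T u v ∧ T v u)
    (S : Set (Σ i, V i)) (hsep : IsSeparator (Comp T V H) S)
    (hmin : ∀ S' : Set (Σ i, V i), S' ⊂ S → ¬ IsSeparator (Comp T V H) S') :
    (∀ s ∈ S, ∀ y, (complUnderlying (Comp T V H)).Reachable s y → y ∈ S) ∧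
      (∀ s ∈ S, ∀ v, v ∉ S → v ≠ s → Comp T V H s v ∨ Comp T V H v s) := by
  have core' : ∀ s ∈ S, ∀ z, z ∉ S → z ≠ s → Comp T V H s z ∨ Comp T V H z s := by
    intro s hsS z hz hne
    by_cases h1 : z.1 = s.1
    · exact absurd (core_lemma V T H hTl hHl hsc hT1 S hsep hmin s z hsS hz h1) id
    · rcases hsc s.1 z.1 (fun h => h1 h.symm) with h | h
      · exact Or.inl (Or.inl h)
      · exact Or.inr (Or.inl h)
  refine ⟨?_, core'⟩
  intro s hsS y hreach
  rw [SimpleGraph.reachable_iff_reflTransGen] at hreach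
  induction hreach with
  | refl => exact hsS
  | @tail b c h1 h2 ih =>
    by_contra hc
    obtain ⟨hne, hn1, hn2⟩ := h2
    rcases core' b ih c hc (Ne.symm hne) with h | h
    · exact hn1 h
    · exact hn2 h
end

section
/- Let Q = T[H_1, …, H_t] be a k-strong-connected semicomplete composition with T not in 𝒯₁. If V(H_i) induces a connected component of the complement of the underlying graph of Q for some i ∈ [t], then the digraph obtained from Q by deleting all arcs of H_i is again a k-strong-connected semicomplete composition. -/
universe u v

/-- If `Q = T[H₁,…,H_t]` is a `k`-strong-connected semicomplete composition
with `T ∉ 𝒯₁` and `V(H_i)` induces a connected component of the complement of the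
underlying graph of `Q`, then deleting all arcs of `H_i` yields a `k`-strong-connected
semicomplete composition. -/
theorem stmt1 {t : ℕ} (ht : 2 ≤ t) (V : Fin t → Type u) [∀ i, Fintype (V i)]
    [∀ i, Nonempty (V i)] (T : Fin t → Fin t → Prop) (H : ∀ i, V i → V i → Prop)
    (hTl : Loopless T) (hHl : ∀ i, Loopless (H i)) (hsc : Semicomplete T)
    (k : ℕ) (hk : KStrong (Comp T V H) k)
    (hT1 : ¬ ∃ u : Fin t, ∀ v, v ≠ u → T u v ∧ T v u)
    (i : Fin t)
    (hconn : ∀ p q : Σ j, V j, p.1 = i → q.1 = i →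
      (complUnderlying (Comp T V H)).Reachable p q)
    (hclosed : ∀ p q : Σ j, V j, p.1 = i →
      (complUnderlying (Comp T V H)).Reachable p q → q.1 = i) :
    KStrong (Comp T V (Function.update H i (fun _ _ => False))) k := by
  classical
  intro S hS
  by_cases hQS : IsSeparator (Comp T V H) S
  · exact hk S hQS
  · have hQ : IsStrong (Restrict (Comp T V H) Sᶜ) := not_not.mp hQS
    by_cases hB : ∃ b : {v // v ∈ Sᶜ}, b.1.1 ≠ i
    · -- there is a surviving vertex outside part i: Q' - S is strong, contradiction
      exfalso
      apply hS
      obtain ⟨b, hb⟩ := hB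
      have key : ∀ (y z : {v // v ∈ Sᶜ}),
          Relation.ReflTransGen (Restrict (Comp T V H) Sᶜ) z y →
          ∀ z' : {v // v ∈ Sᶜ}, (z' = z ∨ (z'.1.1 = i ∧ z.1.1 = i)) →
          Relation.ReflTransGen
            (Restrict (Comp T V (Function.update H i (fun _ _ => False))) Sᶜ) z' y ∨
            (z.1.1 = i ∧ y.1.1 = i) := by
        intro y z h
        induction h using Relation.ReflTransGen.head_induction_on with
        | refl =>
          intro z' hz'
          rcases hz' with rfl | ⟨h1, h2⟩
          · exact Or.inl Relation.ReflTransGen.refl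
          · exact Or.inr ⟨h2, h2⟩
        | @head z w harc hrest ih =>
          intro z' hz'
          have hzz' : z'.1.1 = z.1.1 := by
            rcases hz' with rfl | ⟨h1, h2⟩
            · rfl
            · rw [h1, h2]
          rcases harc with hT | ⟨hp, hHarc⟩
          · -- cross-part arc
            rcases ih w (Or.inl rfl) with ih1 | ⟨hwi, hyi⟩
            · exact Or.inl (Relation.ReflTransGen.head
                (Or.inl (by rw [hzz']; exact hT)) ih1)
            · refine Or.inl (Relation.ReflTransGen.single (Or.inl ?_))
              rw [hzz', hyi, ← hwi]; exact hT
          · -- same-part arc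
            by_cases hi : z.1.1 = i
            · rcases ih z' (Or.inr ⟨hzz'.trans hi, hp.symm.trans hi⟩) with ih1 | ⟨hwi, hyi⟩
              · exact Or.inl ih1
              · exact Or.inr ⟨hi, hyi⟩
            · have hz'z : z' = z := by
                rcases hz' with rfl | ⟨h1, h2⟩
                · rfl
                · exact absurd h2 hi
              subst hz'z
              have hwne : w.1.1 ≠ i := by rw [← hp]; exact hi
              have harc' : Restrict (Comp T V (Function.update H i (fun _ _ => False))) Sᶜ z' w := by
                refine Or.inr ⟨hp, ?_⟩
                rw [Function.update_of_ne hwne]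
                exact hHarc
              rcases ih w (Or.inl rfl) with ih1 | ⟨hwi, hyi⟩
              · exact Or.inl (Relation.ReflTransGen.head harc' ih1)
              · exact absurd hwi hwne
      intro x y
      rcases key y x (hQ x y) x (Or.inl rfl) with h1 | ⟨hxi, hyi⟩
      · exact h1
      · rcases key b x (hQ x b) x (Or.inl rfl) with h1 | ⟨_, hbi⟩
        · rcases key y b (hQ b y) b (Or.inl rfl) with h2 | ⟨hbi, _⟩
          · exact h1.trans h2
          · exact absurd hbi hb
        · exact absurd hbi hb
    · -- every surviving vertex is in part i
      push_neg at hB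
      by_cases htwo : ∃ x y : {v // v ∈ Sᶜ}, x ≠ y
      · obtain ⟨x, y, hxy⟩ := htwo
        have hT1' : ∃ j, j ≠ i ∧ ¬(T i j ∧ T j i) := by
          by_contra hcon
          push_neg at hcon
          exact hT1 ⟨i, fun v hv => hcon v hv⟩
        obtain ⟨j, hji, hjarcs⟩ := hT1'
        have hsub : S ∩ {p : Σ j, V j | p.1 ≠ j} ⊆ S := Set.inter_subset_left
        have hparts : ∀ p : Σ j, V j, p ∈ (S ∩ {p : Σ j, V j | p.1 ≠ j})ᶜ →
            p.1 = i ∨ p.1 = j := by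
          intro p hp
          by_cases hpS : p ∈ S
          · right
            by_contra hpj
            exact hp ⟨hpS, hpj⟩
          · left
            exact hB ⟨p, hpS⟩
        have hsep : IsSeparator (Comp T V H) (S ∩ {p : Σ j, V j | p.1 ≠ j}) := by
          intro hstr
          obtain ⟨w0⟩ : Nonempty (V j) := inferInstance
          have hwmem : (⟨j, w0⟩ : Σ j, V j) ∈ (S ∩ {p : Σ j, V j | p.1 ≠ j})ᶜ :=
            fun hmem => hmem.2 rfl
          have hxmem : (x : Σ j, V j) ∈ (S ∩ {p : Σ j, V j | p.1 ≠ j})ᶜ :=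
            fun hmem => x.2 (hsub hmem)
          have hxi : (x : Σ j, V j).1 = i := hB x
          rcases hsc i j (Ne.symm hji) with hij | hjci
          · -- arcs only from part i to part j: nothing escapes part j
            have hnji : ¬ T j i := fun hn => hjarcs ⟨hij, hn⟩
            have hinv : ∀ p q : {v // v ∈ (S ∩ {p : Σ j, V j | p.1 ≠ j})ᶜ},
                Relation.ReflTransGen
                  (Restrict (Comp T V H) (S ∩ {p : Σ j, V j | p.1 ≠ j})ᶜ) p q →
                p.1.1 = j → q.1.1 = j := by
              intro p q h
              induction h with
              | refl => exact fun h => h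
              | @tail m q hrt harc ih =>
                intro hpj
                have hmj : m.1.1 = j := ih hpj
                rcases harc with hT | ⟨hp, _⟩
                · rw [hmj] at hT
                  rcases hparts q.1 q.2 with hq | hq
                  · rw [hq] at hT; exact absurd hT hnji
                  · rw [hq] at hT; exact absurd hT (hTl j)
                · rw [← hp]; exact hmj
            have := hinv ⟨⟨j, w0⟩, hwmem⟩ ⟨x.1, hxmem⟩
              (hstr ⟨⟨j, w0⟩, hwmem⟩ ⟨x.1, hxmem⟩) rfl
            rw [hxi] at this
            exact hji (this.symm)
          · -- arcs only from part j to part i: nothing escapes part i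
            have hnij : ¬ T i j := fun hn => hjarcs ⟨hn, hjci⟩
            have hinv : ∀ p q : {v // v ∈ (S ∩ {p : Σ j, V j | p.1 ≠ j})ᶜ},
                Relation.ReflTransGen
                  (Restrict (Comp T V H) (S ∩ {p : Σ j, V j | p.1 ≠ j})ᶜ) p q →
                p.1.1 = i → q.1.1 = i := by
              intro p q h
              induction h with
              | refl => exact fun h => h
              | @tail m q hrt harc ih =>
                intro hpi
                have hmi : m.1.1 = i := ih hpi
                rcases harc with hT | ⟨hp, _⟩
                · rw [hmi] at hT
                  rcases hparts q.1 q.2 with hq | hq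
                  · rw [hq] at hT; exact absurd hT (hTl i)
                  · rw [hq] at hT; exact absurd hT hnij
                · rw [← hp]; exact hmi
            have := hinv ⟨x.1, hxmem⟩ ⟨⟨j, w0⟩, hwmem⟩
              (hstr ⟨x.1, hxmem⟩ ⟨⟨j, w0⟩, hwmem⟩) hxi
            exact hji this
        calc k ≤ (S ∩ {p : Σ j, V j | p.1 ≠ j}).ncard := hk _ hsep
          _ ≤ S.ncard := Set.ncard_le_ncard hsub S.toFinite
      · -- at most one surviving vertex: trivially strong, contradiction
        exfalso
        apply hS
        intro x y
        have hxy : x = y := by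
          by_contra hne
          exact htwo ⟨x, y, hne⟩
        rw [hxy]
end

section
/- Every strong semicomplete composition Q = T[H_1, …, H_t] with at least four vertices has two distinct vertices v_1 and v_2 such that Q − v_1 and Q − v_2 are both strong. -/
universe u v

section SemiAux

variable {X : Type u} [Fintype X] {A : X → X → Prop}

/-- The relation `A` restricted (as a relation on `X` itself) to a finset `Z`. -/
private def ROn (A : X → X → Prop) (Z : Finset X) : X → X → Prop :=
  fun u w => A u w ∧ u ∈ Z ∧ w ∈ Z

/-- The induced subdigraph on `Z` is strong. -/
private def SOn (A : X → X → Prop) (Z : Finset X) : Prop :=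
  ∀ x ∈ Z, ∀ y ∈ Z, Relation.ReflTransGen (ROn A Z) x y

private lemma ROn_mono {Z Z' : Finset X} (h : Z ⊆ Z') :
    ∀ x y, ROn A Z x y → ROn A Z' x y := fun _ _ ⟨ha, hx, hy⟩ => ⟨ha, h hx, h hy⟩

/-- If a walk starts inside `S` and ends outside, some arc exits `S`. -/
private lemma exit_lemma {R : X → X → Prop} {S : Set X} {x y : X}
    (h : Relation.ReflTransGen R x y) (hx : x ∈ S) :
    y ∉ S → ∃ u ∈ S, ∃ u', u' ∉ S ∧ R u u' := by
  induction h with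
  | refl => exact fun hy => absurd hx hy
  | @tail b c hxb hbc ih =>
    intro hc
    by_cases hb : b ∈ S
    · exact ⟨b, hb, c, hc, hbc⟩
    · exact ih hb

private lemma isStrong_restrict_of_SOn {Z : Finset X} {v : X}
    (hmem : ∀ x, x ∈ Z ↔ x ≠ v) (h : SOn A Z) :
    IsStrong (Restrict A {w | w ≠ v}) := by
  have key : ∀ x y : X, Relation.ReflTransGen (ROn A Z) x y →
      ∀ (hx : x ≠ v) (hy : y ≠ v),
      Relation.ReflTransGen (Restrict A {w | w ≠ v}) ⟨x, hx⟩ ⟨y, hy⟩ := by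
    intro x y hxy
    induction hxy with
    | refl => intro _ _; exact Relation.ReflTransGen.refl
    | @tail b c hxb hbc ih =>
      intro hx hc
      have hb : b ≠ v := (hmem b).1 hbc.2.1
      exact Relation.ReflTransGen.tail (ih hx hb) hbc.1
  rintro ⟨x, hx⟩ ⟨y, hy⟩
  exact key x y (h x ((hmem x).2 hx) y ((hmem y).2 hy)) hx hy

/-- Core: in a strong semicomplete digraph on `≥ 4` vertices, for every vertex `p`
there is a non-separating vertex distinct from `p`. -/
private lemma sc_good_ne (hsc : Semicomplete A) (hst : IsStrong A)
    (hcard : 4 ≤ Fintype.card X) (p : X) :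
    ∃ g : X, g ≠ p ∧ IsStrong (Restrict A {w | w ≠ g}) := by
  classical
  set F : Finset (Finset X) :=
    Finset.univ.filter (fun Z => p ∈ Z ∧ Z ≠ Finset.univ ∧ SOn A Z) with hF
  have hsingle : ({p} : Finset X) ∈ F := by
    simp only [hF, Finset.mem_filter, Finset.mem_univ, true_and]
    refine ⟨Finset.mem_singleton_self p, ?_, ?_⟩
    · intro hu
      have h1 : (Finset.univ : Finset X).card = Fintype.card X := Finset.card_univ
      rw [← hu, Finset.card_singleton] at h1
      omega
    · intro x hx y hy
      rw [Finset.mem_singleton] at hx hy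
      subst hx; subst hy; exact Relation.ReflTransGen.refl
  obtain ⟨Z, hZF, hZmax⟩ := F.exists_max_image Finset.card ⟨_, hsingle⟩
  simp only [hF, Finset.mem_filter, Finset.mem_univ, true_and] at hZF
  obtain ⟨hZp, hZu, hZs⟩ := hZF
  have hmax : ∀ Z' : Finset X, p ∈ Z' → Z' ≠ Finset.univ → SOn A Z' → Z'.card ≤ Z.card := by
    intro Z' h1 h2 h3
    refine hZmax Z' ?_
    simp only [hF, Finset.mem_filter, Finset.mem_univ, true_and]
    exact ⟨h1, h2, h3⟩
  by_cases hins : ∃ w, w ∉ Z ∧ (∃ c ∈ Z, A w c) ∧ (∃ c ∈ Z, A c w)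
  · -- an outside vertex with arcs both into and out of Z: insert it
    obtain ⟨w, hw, ⟨c₁, hc₁, hwc₁⟩, ⟨c₂, hc₂, hc₂w⟩⟩ := hins
    have reachZ : ∀ x ∈ Z, ∀ y ∈ Z, Relation.ReflTransGen (ROn A (insert w Z)) x y :=
      fun x hx y hy =>
        Relation.ReflTransGen.mono (ROn_mono (Finset.subset_insert w Z)) x y (hZs x hx y hy)
    have hZ' : SOn A (insert w Z) := by
      intro x hx y hy
      rw [Finset.mem_insert] at hx hy
      obtain rfl | hx := hx <;> obtain rfl | hy := hy
      · exact Relation.ReflTransGen.refl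
      · exact Relation.ReflTransGen.head
          ⟨hwc₁, Finset.mem_insert_self _ _, Finset.mem_insert_of_mem hc₁⟩
          (reachZ c₁ hc₁ _ hy)
      · exact Relation.ReflTransGen.tail (reachZ x hx c₂ hc₂)
          ⟨hc₂w, Finset.mem_insert_of_mem hc₂, Finset.mem_insert_self _ _⟩
      · exact reachZ x hx y hy
    have hwp : w ≠ p := fun h => hw (h ▸ hZp)
    by_cases huniv : insert w Z = Finset.univ
    · refine ⟨w, hwp, ?_⟩
      refine isStrong_restrict_of_SOn (Z := Z) (v := w) ?_ hZs
      intro x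
      constructor
      · intro hx hxw; exact hw (hxw ▸ hx)
      · intro hx
        have hx2 : x ∈ insert w Z := huniv ▸ Finset.mem_univ x
        rw [Finset.mem_insert] at hx2
        exact hx2.resolve_left hx
    · exfalso
      have h1 : (insert w Z).card = Z.card + 1 := Finset.card_insert_of_notMem hw
      have h2 := hmax (insert w Z) (Finset.mem_insert_of_mem hZp) huniv hZ'
      omega
  · -- every outside vertex is a "source" or a "sink" w.r.t. Z
    push_neg at hins
    have hNoOut : ∀ w, w ∉ Z → (∃ c ∈ Z, A c w) → ∀ c ∈ Z, ¬ A w c := by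
      rintro w hw ⟨c, hc, hcw⟩ c' hc' hwc'
      exact hins w hw ⟨c', hc', hwc'⟩ c hc hcw
    obtain ⟨w₀, hw₀⟩ : ∃ w₀, w₀ ∉ Z := by
      by_contra h; push_neg at h; exact hZu (Finset.eq_univ_iff_forall.2 h)
    obtain ⟨u₁, hu₁, a₀, ha₀Z, hu₁a₀⟩ :=
      exit_lemma (S := {x : X | x ∈ Z}) (hst p w₀) hZp hw₀
    have ha₀ : a₀ ∈ ({x : X | x ∉ Z ∧ ∃ c ∈ Z, A c x} : Set X) := ⟨ha₀Z, u₁, hu₁, hu₁a₀⟩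
    obtain ⟨a, haS, b, hbS, hab⟩ :=
      exit_lemma (S := {x : X | x ∉ Z ∧ ∃ c ∈ Z, A c x}) (hst a₀ p) ha₀ (fun h => h.1 hZp)
    obtain ⟨haZ, c₃, hc₃, hc₃a⟩ := haS
    have hAnoOut : ∀ c ∈ Z, ¬ A a c := hNoOut a haZ ⟨c₃, hc₃, hc₃a⟩
    have hbZ : b ∉ Z := fun hb => hAnoOut b hb hab
    have hbNoIn : ∀ c ∈ Z, ¬ A c b := fun c hc hcb => hbS ⟨hbZ, c, hc, hcb⟩
    have hane : a ≠ b := fun h => hbNoIn c₃ hc₃ (h ▸ hc₃a)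
    have hA_a : ∀ c ∈ Z, A c a := by
      intro c hc
      rcases hsc c a (fun h => haZ (h ▸ hc)) with h | h
      · exact h
      · exact absurd h (hAnoOut c hc)
    have hB_b : ∀ c ∈ Z, A b c := by
      intro c hc
      rcases hsc b c (fun h => hbZ (by rw [h]; exact hc)) with h | h
      · exact h
      · exact absurd h (hbNoIn c hc)
    -- W = Z ∪ {a, b} is strong
    set W : Finset X := insert a (insert b Z) with hWdef
    have hsub : Z ⊆ W := (Finset.subset_insert b Z).trans (Finset.subset_insert a _)
    have haW : a ∈ W := Finset.mem_insert_self a _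
    have hbW : b ∈ W := Finset.mem_insert_of_mem (Finset.mem_insert_self b Z)
    have hWs : SOn A W := by
      have harc : ∀ x ∈ W, Relation.ReflTransGen (ROn A W) x a := by
        intro x hx
        rcases Finset.mem_insert.1 hx with rfl | hx
        · exact Relation.ReflTransGen.refl
        · rcases Finset.mem_insert.1 hx with rfl | hx
          · exact Relation.ReflTransGen.head ⟨hB_b p hZp, hbW, hsub hZp⟩
              (Relation.ReflTransGen.single ⟨hA_a p hZp, hsub hZp, haW⟩)
          · exact Relation.ReflTransGen.single ⟨hA_a x hx, hsub hx, haW⟩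
      have hbrc : ∀ y ∈ W, Relation.ReflTransGen (ROn A W) b y := by
        intro y hy
        rcases Finset.mem_insert.1 hy with rfl | hy
        · exact Relation.ReflTransGen.head ⟨hB_b p hZp, hbW, hsub hZp⟩
            (Relation.ReflTransGen.single ⟨hA_a p hZp, hsub hZp, haW⟩)
        · rcases Finset.mem_insert.1 hy with rfl | hy
          · exact Relation.ReflTransGen.refl
          · exact Relation.ReflTransGen.single ⟨hB_b y hy, hbW, hsub hy⟩
      intro x hx y hy
      exact (Relation.ReflTransGen.tail (harc x hx) ⟨hab, haW, hbW⟩).trans (hbrc y hy)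
    have hWcard : W.card = Z.card + 2 := by
      rw [hWdef, Finset.card_insert_of_notMem, Finset.card_insert_of_notMem hbZ]
      simp only [Finset.mem_insert]
      push_neg
      exact ⟨hane, haZ⟩
    have hWuniv : W = Finset.univ := by
      by_contra hWu
      have h2 := hmax W (hsub hZp) hWu hWs
      omega
    have hcover : ∀ x : X, x ∉ Z → x = a ∨ x = b := by
      intro x hx
      have hxW : x ∈ W := hWuniv ▸ Finset.mem_univ x
      rcases Finset.mem_insert.1 hxW with rfl | h
      · exact Or.inl rfl
      · rcases Finset.mem_insert.1 h with rfl | h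
        · exact Or.inr rfl
        · exact absurd h hx
    have hZcard : 2 ≤ Z.card := by
      have h2 : W.card = Fintype.card X := by rw [hWuniv, Finset.card_univ]
      omega
    obtain ⟨c, hcZ, hcp⟩ : ∃ c ∈ Z, c ≠ p := Finset.exists_mem_ne (by omega) p
    refine ⟨c, hcp, ?_⟩
    have hac : a ∈ {w : X | w ≠ c} := fun h => haZ (h ▸ hcZ)
    have hbc : b ∈ {w : X | w ≠ c} := fun h => hbZ (h ▸ hcZ)
    obtain ⟨z₁, hz₁Z, hz₁c⟩ : ∃ z ∈ Z, z ≠ c := Finset.exists_mem_ne (by omega) c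
    have hz₁c' : z₁ ∈ {w : X | w ≠ c} := hz₁c
    set A' := Restrict A {w : X | w ≠ c} with hA'
    have hreach_a : ∀ x : {w : X // w ∈ {w : X | w ≠ c}},
        Relation.ReflTransGen A' x ⟨a, hac⟩ := by
      rintro ⟨x, hx⟩
      by_cases hxZ : x ∈ Z
      · exact Relation.ReflTransGen.single (hA_a x hxZ)
      · rcases hcover x hxZ with rfl | rfl
        · exact Relation.ReflTransGen.refl
        · exact Relation.ReflTransGen.head
            (show A' ⟨x, hx⟩ ⟨z₁, hz₁c'⟩ from hB_b z₁ hz₁Z)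
            (Relation.ReflTransGen.single (hA_a z₁ hz₁Z))
    have hreach_b : ∀ y : {w : X // w ∈ {w : X | w ≠ c}},
        Relation.ReflTransGen A' ⟨b, hbc⟩ y := by
      rintro ⟨y, hy⟩
      by_cases hyZ : y ∈ Z
      · exact Relation.ReflTransGen.single (hB_b y hyZ)
      · rcases hcover y hyZ with rfl | rfl
        · exact Relation.ReflTransGen.head
            (show A' ⟨b, hbc⟩ ⟨z₁, hz₁c'⟩ from hB_b z₁ hz₁Z)
            (Relation.ReflTransGen.single (hA_a z₁ hz₁Z))
        · exact Relation.ReflTransGen.refl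
    intro x y
    exact (Relation.ReflTransGen.tail (hreach_a x)
      (show A' ⟨a, hac⟩ ⟨b, hbc⟩ from hab)).trans (hreach_b y)

/-- A strong semicomplete digraph on at least 4 vertices has two distinct
non-separating vertices. -/
private lemma sc_two (hsc : Semicomplete A) (hst : IsStrong A)
    (hcard : 4 ≤ Fintype.card X) :
    ∃ v₁ v₂ : X, v₁ ≠ v₂ ∧ IsStrong (Restrict A {w | w ≠ v₁}) ∧
      IsStrong (Restrict A {w | w ≠ v₂}) := by
  have hne : Nonempty X := Fintype.card_pos_iff.1 (by omega)
  obtain ⟨p⟩ := hne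
  obtain ⟨g₁, _, hg₁⟩ := sc_good_ne hsc hst hcard p
  obtain ⟨g₂, hne2, hg₂⟩ := sc_good_ne hsc hst hcard g₁
  exact ⟨g₂, g₁, hne2, hg₂, hg₁⟩

end SemiAux

section CompAux

variable {t : ℕ} {V : Fin t → Type u} [∀ i, Nonempty (V i)]
  {T : Fin t → Fin t → Prop} {H : ∀ i, V i → V i → Prop}

private lemma proj_reach {p q : Σ i, V i}
    (h : Relation.ReflTransGen (Comp T V H) p q) :
    Relation.ReflTransGen T p.1 q.1 := by
  induction h with
  | refl => exact Relation.ReflTransGen.refl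
  | @tail b c _ hbc ih =>
    rcases hbc with hT | ⟨he, _⟩
    · exact ih.tail hT
    · exact he ▸ ih

private lemma Tstrong (hstrong : IsStrong (Comp T V H)) (j k : Fin t) :
    Relation.ReflTransGen T j k := by
  have x : V j := Classical.arbitrary _
  have y : V k := Classical.arbitrary _
  exact proj_reach (hstrong ⟨j, x⟩ ⟨k, y⟩)

private lemma lift_reach (v : Σ i, V i)
    (R : Fin t → {w : Σ i, V i // w ∈ {w : Σ i, V i | w ≠ v}})
    (hR : ∀ j, (R j).1.1 = j)
    (q : {w : Σ i, V i // w ∈ {w : Σ i, V i | w ≠ v}}) :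
    ∀ j, Relation.TransGen T j q.1.1 →
      ∀ p' : {w : Σ i, V i // w ∈ {w : Σ i, V i | w ≠ v}}, p'.1.1 = j →
      Relation.ReflTransGen (Restrict (Comp T V H) {w | w ≠ v}) p' q := by
  intro j h
  induction h using Relation.TransGen.head_induction_on with
  | single hT =>
    intro p' hp'
    exact Relation.ReflTransGen.single (Or.inl (by rw [hp']; exact hT))
  | @head a c hT _ ihc =>
    intro p' hp'
    refine Relation.ReflTransGen.head (Or.inl ?_) (ihc (R c) (hR c))
    rw [hp', hR c]
    exact hT

private lemma removal_strong (ht : 2 ≤ t) (hTl : Loopless T)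
    (hstrong : IsStrong (Comp T V H)) (v : Σ i, V i)
    (hrep : ∀ j, ∃ w : Σ i, V i, w.1 = j ∧ w ≠ v) :
    IsStrong (Restrict (Comp T V H) {w | w ≠ v}) := by
  classical
  let R : Fin t → {w : Σ i, V i // w ∈ {w : Σ i, V i | w ≠ v}} :=
    fun j => ⟨(hrep j).choose, (hrep j).choose_spec.2⟩
  have hR : ∀ j, (R j).1.1 = j := fun j => (hrep j).choose_spec.1
  intro p q
  by_cases hpq : p.1.1 = q.1.1
  · by_cases hpq2 : p = q
    · exact hpq2 ▸ Relation.ReflTransGen.refl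
    · obtain ⟨k, hk⟩ := Fintype.exists_ne_of_one_lt_card
        (by rw [Fintype.card_fin]; omega) p.1.1
      have h1 : Relation.TransGen T p.1.1 k :=
        (Relation.reflTransGen_iff_eq_or_transGen.1
          (Tstrong hstrong p.1.1 k)).resolve_left hk
      obtain ⟨j₁, hTj₁, -⟩ := Relation.TransGen.head'_iff.1 h1
      have hj₁ : j₁ ≠ q.1.1 := by
        rw [← hpq]
        intro h
        exact hTl p.1.1 (h ▸ hTj₁)
      have h2 : Relation.TransGen T j₁ q.1.1 :=
        (Relation.reflTransGen_iff_eq_or_transGen.1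
          (Tstrong hstrong j₁ q.1.1)).resolve_left (fun h => hj₁ h.symm)
      exact Relation.ReflTransGen.head
        (Or.inl (show T p.1.1 (R j₁).1.1 by rw [hR]; exact hTj₁))
        (lift_reach v R hR q j₁ h2 (R j₁) (hR j₁))
  · have h2 : Relation.TransGen T p.1.1 q.1.1 :=
      (Relation.reflTransGen_iff_eq_or_transGen.1
        (Tstrong hstrong p.1.1 q.1.1)).resolve_left (fun h => hpq h.symm)
    exact lift_reach v R hR q p.1.1 h2 p rfl

end CompAux

/-- Every strong semicomplete composition with at least four vertices has two
distinct vertices whose individual deletion leaves a strong digraph. -/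
theorem stmt2 {t : ℕ} (ht : 2 ≤ t) (V : Fin t → Type u) [∀ i, Fintype (V i)]
    [∀ i, Nonempty (V i)] (T : Fin t → Fin t → Prop) (H : ∀ i, V i → V i → Prop)
    (hTl : Loopless T) (hHl : ∀ i, Loopless (H i)) (hsc : Semicomplete T)
    (hstrong : IsStrong (Comp T V H))
    (hcard : 4 ≤ Fintype.card (Σ i, V i)) :
    ∃ v₁ v₂ : Σ i, V i, v₁ ≠ v₂ ∧
      IsStrong (Restrict (Comp T V H) {w | w ≠ v₁}) ∧
      IsStrong (Restrict (Comp T V H) {w | w ≠ v₂}) := by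
  classical
  by_cases hbig : ∃ i : Fin t, ∃ x y : V i, x ≠ y
  · obtain ⟨i, x, y, hxy⟩ := hbig
    have hne12 : (⟨i, x⟩ : Σ i, V i) ≠ ⟨i, y⟩ := by
      intro h
      exact hxy (by simpa using h)
    refine ⟨⟨i, x⟩, ⟨i, y⟩, hne12, ?_, ?_⟩
    · refine removal_strong ht hTl hstrong _ ?_
      intro j
      by_cases hj : j = i
      · subst hj
        exact ⟨⟨j, y⟩, rfl, fun h => hxy (Eq.symm (show y = x from by simpa using h))⟩
      · exact ⟨⟨j, Classical.arbitrary _⟩, rfl,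
          fun h => hj (congrArg Sigma.fst h)⟩
    · refine removal_strong ht hTl hstrong _ ?_
      intro j
      by_cases hj : j = i
      · subst hj
        exact ⟨⟨j, x⟩, rfl, fun h => hxy (show x = y from by simpa using h)⟩
      · exact ⟨⟨j, Classical.arbitrary _⟩, rfl,
          fun h => hj (congrArg Sigma.fst h)⟩
  · push_neg at hbig
    have hscA : Semicomplete (Comp T V H) := by
      intro p q hne
      have hfst : p.1 ≠ q.1 := by
        intro h
        apply hne
        obtain ⟨i, x⟩ := p
        obtain ⟨j, y⟩ := q
        dsimp at h
        subst h
        exact congrArg (Sigma.mk i) (hbig i x y)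
      rcases hsc p.1 q.1 hfst with h | h
      · exact Or.inl (Or.inl h)
      · exact Or.inr (Or.inl h)
    exact sc_two hscA hstrong hcard
end

section
/- Let k ≥ 2 be an integer and let Q = T[H_1, …, H_t] be a digraph composition. Then Q has a k-king if and only if T has a k-king u_i for some i ∈ [t] and at least one of the following holds: (i) H_i has a k-king; (ii) |V(H_i)| ≥ 2 and u_i belongs to a directed cycle of T of length at most k. -/
universe u v

section helpers
variable {V : Type u} {A : V → V → Prop}

theorem reachIn_refl (n : ℕ) (x : V) : ReachIn A n x x := by
  cases n with
  | zero => rfl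
  | succ n => exact Or.inl rfl

theorem reachIn_succ : ∀ {n : ℕ} {x y : V}, ReachIn A n x y → ReachIn A (n+1) x y := by
  intro n
  induction n with
  | zero => intro x y h; exact Or.inl h
  | succ n ih =>
    intro x y h
    rcases h with h | ⟨z, hz, hr⟩
    · exact Or.inl h
    · exact Or.inr ⟨z, hz, ih hr⟩

theorem reachIn_mono {n m : ℕ} (h : n ≤ m) {x y : V} (hr : ReachIn A n x y) :
    ReachIn A m x y := by
  induction h with
  | refl => exact hr
  | step _ ih => exact reachIn_succ ih

theorem reachIn_trans : ∀ {n : ℕ} {x y : V} {m : ℕ} {z : V},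
    ReachIn A n x y → ReachIn A m y z → ReachIn A (n + m) x z := by
  intro n
  induction n with
  | zero => intro x y m z h1 h2; cases h1; simpa using h2
  | succ n ih =>
    intro x y m z h1 h2
    rcases h1 with h1 | ⟨w, hw, hr⟩
    · subst h1; exact reachIn_mono (Nat.le_add_left m (n+1)) h2
    · have : ReachIn A (n + m) w z := ih hr h2
      have : ReachIn A ((n + m) + 1) x z := Or.inr ⟨w, hw, this⟩
      simpa [Nat.succ_add] using this

theorem chain_reach : ∀ (l : List V) (x : V), List.Chain A x l →
    ReachIn A l.length x (l.getLastD x)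
  | [], x, _ => rfl
  | b :: l, x, h => by
    rcases List.chain_cons.mp h with ⟨hab, hc⟩
    rw [List.getLastD_cons]
    exact Or.inr ⟨b, hab, chain_reach l b hc⟩

/-- Path extraction. -/
theorem reach_path : ∀ {n : ℕ} {x y : V}, ReachIn A n x y →
    ∃ l : List V, l.Nodup ∧ l.Chain' A ∧ l.head? = some x ∧ l.getLast? = some y ∧
      l.length ≤ n + 1 := by
  intro n
  induction n with
  | zero =>
    intro x y h
    cases h
    exact ⟨[x], by simp, List.isChain_singleton x, rfl, rfl, by simp⟩
  | succ n ih =>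
    intro x y h
    rcases h with h | ⟨z, hxz, hr⟩
    · subst h; exact ⟨[x], by simp, List.isChain_singleton x, rfl, rfl, by simp⟩
    · obtain ⟨l, hnd, hch, hhd, hlast, hlen⟩ := ih hr
      by_cases hx : x ∈ l
      · obtain ⟨s, r, rfl⟩ := List.append_of_mem hx
        refine ⟨x :: r, ?_, ?_, rfl, ?_, ?_⟩
        · exact hnd.sublist (List.suffix_append s (x :: r)).sublist
        · exact (List.isChain_append.mp hch).2.1
        · rw [List.getLast?_append] at hlast
          simpa using hlast
        · simp at hlen ⊢; omega
      · refine ⟨x :: l, List.nodup_cons.mpr ⟨hx, hnd⟩, ?_, rfl, ?_, by simp; omega⟩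
        · refine List.isChain_cons.mpr ⟨?_, hch⟩
          intro b hb
          rw [hhd] at hb
          cases hb; exact hxz
        · cases l with
          | nil => simp at hhd
          | cons a l' => rw [List.getLast?_cons_cons]; exact hlast
end helpers

section comp
variable {t : ℕ} {T : Fin t → Fin t → Prop} {V : Fin t → Type u} {H : ∀ i, V i → V i → Prop}

theorem comp_proj : ∀ {n : ℕ} {p q : Σ i, V i}, ReachIn (Comp T V H) n p q →
    ReachIn T n p.1 q.1 := by
  intro n
  induction n with
  | zero => intro p q h; exact congrArg Sigma.fst h
  | succ n ih =>
    intro p q h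
    rcases h with h | ⟨z, hz, hr⟩
    · exact Or.inl (congrArg Sigma.fst h)
    · rcases hz with hz | ⟨he, _⟩
      · exact Or.inr ⟨z.1, hz, ih hr⟩
      · exact he ▸ reachIn_succ (ih hr)

theorem comp_decomp : ∀ {n : ℕ} {i : Fin t} {a b : V i},
    ReachIn (Comp T V H) n ⟨i, a⟩ ⟨i, b⟩ →
    ReachIn (H i) n a b ∨ ∃ j m, T i j ∧ ReachIn T m j i ∧ m + 1 ≤ n := by
  intro n
  induction n with
  | zero =>
    intro i a b h
    left
    have := (Sigma.mk.inj_iff.mp h).2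
    exact eq_of_heq this
  | succ n ih =>
    intro i a b h
    rcases h with h | ⟨z, hz, hr⟩
    · left
      exact Or.inl (eq_of_heq (Sigma.mk.inj_iff.mp h).2)
    · obtain ⟨zi, zc⟩ := z
      rcases hz with hz | ⟨he, hH⟩
      · exact Or.inr ⟨zi, n, hz, comp_proj hr, le_refl _⟩
      · simp only at he
        subst he
        rcases ih hr with h' | ⟨j, m, h1, h2, h3⟩
        · exact Or.inl (Or.inr ⟨zc, hH, h'⟩)
        · exact Or.inr ⟨j, m, h1, h2, h3.trans (Nat.le_succ n)⟩

theorem lift_H : ∀ {n : ℕ} {i : Fin t} {a b : V i}, ReachIn (H i) n a b →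
    ReachIn (Comp T V H) n (⟨i, a⟩ : Σ i, V i) ⟨i, b⟩ := by
  intro n
  induction n with
  | zero => intro i a b h; cases h; rfl
  | succ n ih =>
    intro i a b h
    rcases h with h | ⟨c, hac, hr⟩
    · subst h; exact Or.inl rfl
    · exact Or.inr ⟨⟨i, c⟩, Or.inr ⟨rfl, hac⟩, ih hr⟩

theorem lift_T [∀ i, Nonempty (V i)] : ∀ {n : ℕ} {i j : Fin t}, ReachIn T n i j → i ≠ j →
    ∀ (x : V i) (y : V j), ReachIn (Comp T V H) n ⟨i, x⟩ ⟨j, y⟩ := by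
  intro n
  induction n with
  | zero => intro i j h hne x y; exact absurd h hne
  | succ n ih =>
    intro i j h hne x y
    rcases h with h | ⟨z, hiz, hr⟩
    · exact absurd h hne
    · by_cases hzj : z = j
      · subst hzj
        exact Or.inr ⟨⟨z, y⟩, Or.inl hiz, reachIn_refl n _⟩
      · exact Or.inr ⟨⟨z, Classical.arbitrary (V z)⟩, Or.inl hiz, ih hr hzj _ y⟩
end comp

section cyc
variable {V : Type u} {A : V → V → Prop}

theorem getLast?_append_cons (l₁ : List V) (a : V) (l₂ : List V) :
    (l₁ ++ a :: l₂).getLast? = (a :: l₂).getLast? := by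
  rw [List.getLast?_append]
  obtain ⟨v, hv⟩ : ∃ v, (a :: l₂).getLast? = some v :=
    ⟨_, List.getLast?_eq_getLast (by simp)⟩
  rw [hv]; rfl

theorem cycle_of_closed (hL : Loopless A) {i j : V} (hij : A i j) {m : ℕ}
    (hr : ReachIn A m j i) :
    ∃ c : List V, IsCycleList A c ∧ c.length ≤ m + 1 ∧ i ∈ c := by
  have hji : j ≠ i := fun h => hL i (h ▸ hij)
  obtain ⟨p, hnd, hch, hhd, hlast, hlen⟩ := reach_path hr
  cases p with
  | nil => simp at hhd
  | cons a r =>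
    have ha : a = j := by simpa using hhd
    subst ha
    cases r with
    | nil => simp at hlast; exact absurd hlast hji
    | cons b r' =>
      rw [List.getLast?_cons_cons] at hlast
      obtain ⟨s, hs⟩ : ∃ s, b :: r' = s ++ [i] := by
        refine ⟨(b :: r').dropLast, ?_⟩
        have h1 := List.dropLast_append_getLast (l := b :: r') (by simp)
        rw [List.getLast?_eq_getLast (l := b :: r') (by simp)] at hlast
        rw [Option.some_inj] at hlast
        rw [hlast] at h1
        exact h1.symm
      rw [hs] at hnd hch hlen
      simp only [List.nodup_cons, List.mem_append, List.nodup_append] at hnd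
      rw [show a :: (s ++ [i]) = (a :: s) ++ [i] from rfl] at hch
      obtain ⟨hch1, _, hjunc⟩ := List.isChain_append.mp hch
      refine ⟨i :: a :: s, ⟨by simp, ?_, ?_, ?_⟩, ?_, by simp⟩
      · -- Nodup
        simp only [List.nodup_cons, List.mem_cons, List.nodup_append] at *
        obtain ⟨h1, h2, -, h4⟩ := hnd
        refine ⟨?_, fun h => h1 (Or.inl h), h2⟩
        rintro (h | h)
        · exact h1 (Or.inr (Or.inl h.symm))
        · exact h4 i h i (by simp) rfl
      · -- Chain'
        refine List.isChain_cons.mpr ⟨?_, hch1⟩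
        intro y hy
        simp at hy
        subst hy
        exact hij
      · -- wrap arc
        intro x hx y hy
        rw [List.getLast?_cons_cons] at hx
        simp only [List.head?_cons, Option.mem_some_iff] at hy
        subst hy
        exact hjunc x hx i (by simp)
      · -- length
        simp at hlen ⊢
        omega

theorem cycle_unfold {l : List V} (hc : IsCycleList A l) {i : V} (hi : i ∈ l) :
    ∃ j, j ≠ i ∧ A i j ∧ ReachIn A (l.length - 1) j i := by
  obtain ⟨hlen2, hnd, hch, hwrap⟩ := hc
  obtain ⟨l₁, l₂, hl⟩ := List.append_of_mem hi
  have hnd' := hl ▸ hnd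
  rw [List.nodup_middle, List.nodup_cons, List.mem_append] at hnd'
  obtain ⟨hi12, -⟩ := hnd'
  have hsplit := List.isChain_split.mp (hl ▸ hch)
  obtain ⟨hchL, hchR⟩ := hsplit
  cases l₂ with
  | nil =>
    cases l₁ with
    | nil => rw [hl] at hlen2; simp at hlen2
    | cons c l₁' =>
      refine ⟨c, fun h => hi12 (Or.inl (h ▸ List.mem_cons_self)), ?_, ?_⟩
      · -- A i c from wrap
        refine hwrap i ?_ c ?_
        · rw [hl]; rw [getLast?_append_cons]; rfl
        · rw [hl]; rfl
      · -- walk c → i along l₁' ++ [i]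
        have hchain : List.Chain A c (l₁' ++ [i]) := hchL
        have := chain_reach (l₁' ++ [i]) c hchain
        rw [List.getLastD_concat] at this
        have hle : (l₁' ++ [i]).length = l.length - 1 := by
          rw [hl]; simp
        rw [hle] at this
        exact this
  | cons c l₂' =>
    rcases List.isChain_cons_cons.mp hchR with ⟨hic, hchR'⟩
    refine ⟨c, fun h => hi12 (Or.inr (h ▸ List.mem_cons_self)), hic, ?_⟩
    have hjunc : ∀ x ∈ (c :: l₂').getLast?, ∀ y ∈ (l₁ ++ [i]).head?, A x y := by
      intro x hx y hy
      refine hwrap x ?_ y ?_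
      · rw [hl, getLast?_append_cons, List.getLast?_cons_cons]; exact hx
      · rw [hl]
        cases l₁ with
        | nil => simpa using hy
        | cons d l₁' => simpa using hy
    have hbig : List.Chain' A ((c :: l₂') ++ (l₁ ++ [i])) :=
      List.isChain_append.mpr ⟨hchR.tail, hchL, hjunc⟩
    have hchain : List.Chain A c (l₂' ++ (l₁ ++ [i])) := hbig
    have := chain_reach (l₂' ++ (l₁ ++ [i])) c hchain
    rw [show l₂' ++ (l₁ ++ [i]) = (l₂' ++ l₁) ++ [i] by simp] at this
    rw [List.getLastD_concat] at this
    rw [show ((l₂' ++ l₁) ++ [i]).length = l.length - 1 by rw [hl]; simp; omega] at this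
    exact this
end cyc

/-- For `k ≥ 2`, a composition `Q = T[H₁,…,H_t]` has a `k`-king if and only if
`T` has a `k`-king `u_i` such that either `H_i` has a `k`-king, or `|V(H_i)| ≥ 2` and `u_i`
lies on a directed cycle of `T` of length at most `k`. -/
theorem stmt4 {t : ℕ} (ht : 2 ≤ t) (V : Fin t → Type u) [∀ i, Fintype (V i)]
    [∀ i, Nonempty (V i)] (T : Fin t → Fin t → Prop) (H : ∀ i, V i → V i → Prop)
    (hTl : Loopless T) (hHl : ∀ i, Loopless (H i))
    (k : ℕ) (hk : 2 ≤ k) :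
    (∃ x : Σ i, V i, IsKKing (Comp T V H) k x) ↔
      ∃ i : Fin t, IsKKing T k i ∧
        ((∃ x : V i, IsKKing (H i) k x) ∨
          (2 ≤ Fintype.card (V i) ∧
            ∃ l : List (Fin t), IsCycleList T l ∧ l.length ≤ k ∧ i ∈ l)) := by
  constructor
  · rintro ⟨⟨i, a⟩, hking⟩
    refine ⟨i, ?_, ?_⟩
    · intro j
      exact comp_proj (hking ⟨j, Classical.arbitrary (V j)⟩)
    · by_cases hH : ∃ x : V i, IsKKing (H i) k x
      · exact Or.inl hH
      · have hHa : ¬ IsKKing (H i) k a := fun h => hH ⟨a, h⟩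
        rw [IsKKing] at hHa
        push_neg at hHa
        obtain ⟨y, hy⟩ := hHa
        have hya : y ≠ a := by rintro rfl; exact hy (reachIn_refl k y)
        rcases comp_decomp (hking ⟨i, y⟩) with h | ⟨j, m, h1, h2, h3⟩
        · exact absurd h hy
        · obtain ⟨c, hc, hclen, hcmem⟩ := cycle_of_closed hTl h1 h2
          exact Or.inr ⟨Fintype.one_lt_card_iff.mpr ⟨y, a, hya⟩, c, hc,
            hclen.trans h3, hcmem⟩
  · rintro ⟨i, hTk, hcase | ⟨hcard, l, hcyc, hllen, hlmem⟩⟩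
    · obtain ⟨a, ha⟩ := hcase
      refine ⟨⟨i, a⟩, ?_⟩
      rintro ⟨j, y⟩
      by_cases hj : i = j
      · subst hj; exact lift_H (ha y)
      · exact lift_T (hTk j) hj a y
    · obtain ⟨j, hji, hij, hr⟩ := cycle_unfold hcyc hlmem
      have x := Classical.arbitrary (V i)
      refine ⟨⟨i, x⟩, ?_⟩
      rintro ⟨j', y⟩
      by_cases hj : i = j'
      · subst hj
        have h1 : ReachIn (Comp T V H) (l.length - 1)
            ⟨j, Classical.arbitrary (V j)⟩ ⟨i, y⟩ := lift_T hr hji _ y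
        have h2 : ReachIn (Comp T V H) ((l.length - 1) + 1) ⟨i, x⟩ ⟨i, y⟩ :=
          Or.inr ⟨_, Or.inl hij, h1⟩
        refine reachIn_mono ?_ h2
        have h3 := hcyc.1
        omega
      · exact lift_T (hTk j') hj x y
end

section
/- Let k ≥ 2 be an integer and let Q = T[H_1, …, H_t] be a digraph composition. Then all vertices of Q are k-kings if and only if for each i ∈ [t], the vertex u_i is a k-king of T and at least one of the following holds: (i) all vertices of H_i are k-kings of H_i; (ii) |V(H_i)| ≥ 2 and u_i belongs to a directed cycle of T of length at most k. -/
universe u v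

namespace S5
variable {V : Type u} {W : Type v} {A : V → V → Prop} {B : W → W → Prop}

lemma getLast?_cons_ne {a : V} {l : List V} (h : l ≠ []) :
    (a :: l).getLast? = l.getLast? := by
  cases l with
  | nil => simp at h
  | cons b m => simp [List.getLast?_cons_cons]

lemma getLast?_append_ne {l r : List V} (h : r ≠ []) :
    (l ++ r).getLast? = r.getLast? := by
  rw [List.getLast?_append]
  cases hr : r.getLast? with
  | none => exact absurd (List.getLast?_eq_none_iff.mp hr) h
  | some b => rfl

lemma reachIn_refl (A : V → V → Prop) : ∀ (n : ℕ) (x : V), ReachIn A n x x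
  | 0, _ => rfl
  | _+1, _ => Or.inl rfl

lemma reachIn_succ : ∀ {n : ℕ} {x y : V}, ReachIn A n x y → ReachIn A (n+1) x y
  | 0, _, _, h => Or.inl h
  | _+1, _, _, Or.inl h => Or.inl h
  | _+1, _, _, Or.inr ⟨z, hxz, hr⟩ => Or.inr ⟨z, hxz, reachIn_succ hr⟩

lemma reachIn_mono {n m : ℕ} (h : n ≤ m) {x y : V} (hr : ReachIn A n x y) :
    ReachIn A m x y := by
  induction m with
  | zero => simpa [Nat.le_zero.mp h] using hr
  | succ m ih =>
    rcases Nat.lt_or_ge n (m+1) with h' | h'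
    · exact reachIn_succ (ih (Nat.lt_succ_iff.mp h'))
    · have : n = m + 1 := le_antisymm h h'
      subst this; exact hr

lemma reachIn_head {n : ℕ} {x z y : V} (h : A x z) (hr : ReachIn A n z y) :
    ReachIn A (n+1) x y := Or.inr ⟨z, h, hr⟩

lemma reachIn_map (f : V → W) (hf : ∀ a b, A a b → f a = f b ∨ B (f a) (f b)) :
    ∀ {n : ℕ} {x y : V}, ReachIn A n x y → ReachIn B n (f x) (f y)
  | 0, x, y, h => by rw [show x = y from h]; exact rfl
  | _+1, x, y, Or.inl h => by rw [show x = y from h]; exact reachIn_refl B _ _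
  | n+1, x, y, Or.inr ⟨z, hxz, hr⟩ => by
    rcases hf _ _ hxz with h | h
    · rw [h]; exact reachIn_succ (reachIn_map f hf hr)
    · exact Or.inr ⟨f z, h, reachIn_map f hf hr⟩

lemma chain'_reachIn : ∀ (l : List V), l.Chain' A → ∀ x y, l.head? = some x →
    l.getLast? = some y → ReachIn A (l.length - 1) x y
  | [], _, x, _, h, _ => by simp at h
  | [a], _, x, y, h, h' => by
    simp at h h'; subst h; subst h'; exact rfl
  | a :: b :: l, hc, x, y, h, h' => by
    simp only [List.head?_cons, Option.some.injEq] at h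
    subst h
    simp only [List.Chain', List.isChain_cons_cons] at hc
    have := chain'_reachIn (b :: l) hc.2 b y rfl
      (by rw [← h', List.getLast?_cons_cons])
    simpa using reachIn_head hc.1 this

lemma reachIn_exists_chain : ∀ {n : ℕ} {x y : V}, ReachIn A n x y →
    ∃ l : List V, l.Chain' A ∧ l.head? = some x ∧ l.getLast? = some y ∧ l.length ≤ n + 1
  | 0, x, _, h => ⟨[x], List.isChain_singleton x, by simp, by simp [show x = _ from h], by simp⟩
  | _+1, x, _, Or.inl h => ⟨[x], List.isChain_singleton x, by simp, by simp [show x = _ from h], by simp⟩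
  | n+1, x, y, Or.inr ⟨z, hxz, hr⟩ => by
    obtain ⟨l, hc, hh, hl, hlen⟩ := reachIn_exists_chain hr
    have hne : l ≠ [] := by rintro rfl; simp at hh
    refine ⟨x :: l, ?_, rfl, ?_, by simpa using Nat.succ_le_succ hlen⟩
    · simp only [List.Chain', List.isChain_cons]
      exact ⟨fun w hw => by rw [hh] at hw; exact (Option.some_inj.mp hw) ▸ hxz, hc⟩
    · rwa [getLast?_cons_ne hne]

/-- Path extraction: from any chain extract a nodup chain with the same endpoints. -/
lemma exists_path : ∀ (n : ℕ) (l : List V), l.length ≤ n → l.Chain' A →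
    ∃ p : List V, p.Nodup ∧ p.Chain' A ∧ p.head? = l.head? ∧
      p.getLast? = l.getLast? ∧ p.length ≤ l.length ∧ p ⊆ l
  | 0, l, hl, _ => by
    have : l = [] := List.length_eq_zero_iff.mp (Nat.le_zero.mp hl)
    subst this
    exact ⟨[], by simp, List.isChain_nil, rfl, rfl, le_refl _, by simp⟩
  | n+1, [], _, _ => ⟨[], by simp, List.isChain_nil, rfl, rfl, le_refl _, by simp⟩
  | n+1, x :: xs, hl, hc => by
    by_cases hx : x ∈ xs
    · obtain ⟨b, c, rfl⟩ := List.append_of_mem hx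
      have hlen : (x :: c).length ≤ n := by
        simp only [List.length_cons, List.length_append] at hl ⊢
        omega
      have hsuffix : (x :: c) <:+ (x :: b ++ x :: c) := by
        refine ⟨x :: b, by simp⟩
      have hc' : (x :: c).Chain' A := hc.suffix hsuffix
      obtain ⟨p, hp1, hp2, hp3, hp4, hp5, hp6⟩ := exists_path n (x :: c) hlen hc'
      refine ⟨p, hp1, hp2, by simpa using hp3, ?_, ?_, fun a ha => hsuffix.subset (hp6 ha)⟩
      · rw [hp4, show (x :: (b ++ x :: c)) = (x :: b) ++ (x :: c) from by simp,
          getLast?_append_ne (l := x :: b) (by simp)]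
      · calc p.length ≤ (x :: c).length := hp5
          _ ≤ (x :: (b ++ x :: c)).length := by simp [List.length_append]; omega
    · cases xs with
      | nil => exact ⟨[x], by simp, List.isChain_singleton x, rfl, rfl, le_refl _, by simp⟩
      | cons z zs =>
        have hlen : (z :: zs).length ≤ n := by simpa using Nat.succ_le_succ_iff.mp hl
        simp only [List.Chain', List.isChain_cons_cons] at hc
        obtain ⟨p, hp1, hp2, hp3, hp4, hp5, hp6⟩ := exists_path n (z :: zs) hlen hc.2
        have hpne : p ≠ [] := by
          rintro rfl; simp at hp3
        refine ⟨x :: p, ?_, ?_, rfl, ?_, by simpa using Nat.succ_le_succ hp5,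
          fun a ha => by
            rcases List.mem_cons.mp ha with rfl | h
            · exact List.mem_cons_self
            · exact List.mem_cons_of_mem x (hp6 h)⟩
        · exact List.nodup_cons.mpr ⟨fun h => hx (hp6 h), hp1⟩
        · simp only [List.Chain', List.isChain_cons]
          refine ⟨fun w hw => ?_, hp2⟩
          rw [hp3] at hw
          simp only [List.head?_cons, Option.mem_def, Option.some.injEq] at hw
          exact hw ▸ hc.1
        · rw [getLast?_cons_ne hpne, hp4, List.getLast?_cons_cons]

/-- A nodup chain from `z` to `i` plus an arc `i → z` gives a cycle through `i`. -/
lemma cycle_of_path : ∀ (p : List V), p.Nodup → p.Chain' A → ∀ {z i : V},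
    p.head? = some z → p.getLast? = some i → z ≠ i → A i z →
    ∃ c : List V, IsCycleList A c ∧ c.length ≤ p.length ∧ i ∈ c
  | [], _, _, z, i, hh, _, _, _ => by simp at hh
  | [a], _, _, z, i, hh, hl, hzi, _ => by
    simp at hh hl; exact absurd (hh.symm.trans hl) hzi
  | a :: b :: l, hp1, hp2, z, i, hh, hl, hzi, hiz => by
    have ha : a = z := by simpa using hh
    subst ha
    set p : List V := a :: b :: l with hpdef
    have hpne : p ≠ [] := by simp [hpdef]
    have hdlne : p.dropLast ≠ [] := by simp [hpdef]
    have hlast : p.getLast hpne = i := by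
      have := List.getLast?_eq_getLast hpne
      rw [hl] at this; exact (Option.some_inj.mp this.symm)
    have hsplit : p.dropLast ++ [i] = p := by
      rw [← hlast]; exact List.dropLast_append_getLast hpne
    refine ⟨i :: p.dropLast, ⟨?_, ?_, ?_, ?_⟩, ?_, List.mem_cons_self⟩
    · simp [hpdef]
    · refine List.nodup_cons.mpr ⟨?_, hp1.sublist (List.dropLast_sublist p)⟩
      intro hmem
      have hp1' : (p.dropLast ++ [i]).Nodup := hsplit.symm ▸ hp1
      exact (List.disjoint_of_nodup_append hp1') hmem (by simp)
    · simp only [List.Chain', List.isChain_cons]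
      refine ⟨fun w hw => ?_, hp2.prefix (List.dropLast_prefix p)⟩
      have : p.dropLast.head? = some a := by simp [hpdef]
      rw [this] at hw
      have : w = a := by simpa using hw.symm
      rw [this]; exact hiz
    · intro u hu v hv
      simp only [List.head?_cons, Option.mem_def, Option.some.injEq] at hv
      subst hv
      rw [getLast?_cons_ne hdlne] at hu
      have hpc : p.Chain' A := hp2
      rw [← hsplit] at hpc; simp only [List.Chain', List.isChain_append] at hpc
      exact hpc.2.2 u hu i (by simp)
    · have : (i :: p.dropLast).length = p.length := by
        rw [List.length_cons, List.length_dropLast]; simp [hpdef]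
      rw [this]

lemma cycle_of_closed (hTl : Loopless A) {i z : V} {m : ℕ} (hiz : A i z)
    (hr : ReachIn A m z i) :
    ∃ c : List V, IsCycleList A c ∧ c.length ≤ m + 1 ∧ i ∈ c := by
  obtain ⟨l, hc, hh, hl, hlen⟩ := reachIn_exists_chain hr
  obtain ⟨p, hp1, hp2, hp3, hp4, hp5, _⟩ := exists_path l.length l (le_refl _) hc
  rw [hh] at hp3; rw [hl] at hp4
  have hzi : z ≠ i := fun h => hTl i (h ▸ hiz)
  obtain ⟨c, hcyc, hclen, hic⟩ := cycle_of_path p hp1 hp2 hp3 hp4 hzi hiz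
  exact ⟨c, hcyc, le_trans hclen (le_trans hp5 hlen), hic⟩

/-- From a cycle through `i`, extract an arc `i → z` and a walk back. -/
lemma closed_of_cycle {l : List V} (hc : IsCycleList A l) {i : V} (hi : i ∈ l) :
    ∃ z, A i z ∧ ReachIn A (l.length - 1) z i := by
  obtain ⟨hlen, hnd, hch, harc⟩ := hc
  obtain ⟨a, b, rfl⟩ := List.append_of_mem hi
  obtain ⟨L, hL⟩ : ∃ L, (a ++ i :: b).getLast? = some L := by
    cases h : (a ++ i :: b).getLast? with
    | none => rw [List.getLast?_eq_none_iff] at h; simp at h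
    | some L => exact ⟨L, rfl⟩
  obtain ⟨h0, hh0⟩ : ∃ h0, (a ++ i :: b).head? = some h0 := by
    cases h : (a ++ i :: b).head? with
    | none => rw [List.head?_eq_none_iff] at h; simp at h
    | some h0 => exact ⟨h0, rfl⟩
  have hLh0 : A L h0 := harc L hL h0 hh0
  have hja : ∀ w ∈ a.getLast?, A w i := by
    intro w hw
    exact (List.isChain_append.mp hch).2.2 w hw i (by simp)
  have hcib : (i :: b).Chain' A := (List.isChain_append.mp hch).2.1
  have hca : a.Chain' A := (List.isChain_append.mp hch).1
  set rest : List V := b ++ (a ++ [i]) with hrest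
  have hcwch : (i :: rest).Chain' A := by
    rw [hrest, show i :: (b ++ (a ++ [i])) = (i :: b) ++ (a ++ [i]) from by simp]
    simp only [List.Chain', List.isChain_append]
    refine ⟨hcib, ?_, ?_⟩
    · skip
      exact ⟨hca, by simp, fun x hx y hy => by
        simp only [List.head?_cons, Option.mem_def, Option.some.injEq] at hy
        exact hy ▸ hja x hx⟩
    · intro x hx y hy
      have hx' : x = L := by
        rw [← getLast?_append_ne (l := a) (r := i :: b) (by simp), hL] at hx
        symm; simpa using hx
      have hy' : y = h0 := by
        have heq : (a ++ [i]).head? = (a ++ i :: b).head? := by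
          rw [List.head?_append, List.head?_append]; rfl
        rw [heq, hh0] at hy
        symm; simpa using hy
      rw [hx', hy']; exact hLh0
  obtain ⟨z, hz⟩ : ∃ z, rest.head? = some z := by
    cases h : rest.head? with
    | none => rw [List.head?_eq_none_iff] at h; simp [hrest] at h
    | some z => exact ⟨z, rfl⟩
  have hAiz : A i z := by
    simp only [List.Chain', List.isChain_cons] at hcwch
    exact hcwch.1 z hz
  have hrch : rest.Chain' A := (List.isChain_cons.mp hcwch).2
  have hrl : rest.getLast? = some i := by
    rw [hrest, getLast?_append_ne (by simp), getLast?_append_ne (by simp)]; rfl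
  have := chain'_reachIn rest hrch z i hz hrl
  refine ⟨z, hAiz, reachIn_mono ?_ this⟩
  simp [hrest, List.length_append]
  omega

end S5

namespace S5
variable {t : ℕ} {T : Fin t → Fin t → Prop} {V : Fin t → Type u} {H : ∀ i, V i → V i → Prop}

lemma comp_proj {n : ℕ} {p q : Σ i, V i} (h : ReachIn (Comp T V H) n p q) :
    ReachIn T n p.1 q.1 := by
  refine reachIn_map Sigma.fst ?_ h
  rintro a b (hT | ⟨heq, _⟩)
  · exact Or.inr hT
  · exact Or.inl heq

lemma comp_dichotomy : ∀ (n : ℕ) (i : Fin t) (x : V i) (j : Fin t) (w : V j),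
    ReachIn (Comp T V H) n ⟨i, x⟩ ⟨j, w⟩ →
    (∃ h : i = j, ReachIn (H j) n (h ▸ x) w) ∨
    (∃ z m, T i z ∧ m + 1 ≤ n ∧ ReachIn T m z j)
  | 0, i, x, j, w, h => by
    have h' : (⟨i, x⟩ : Σ i, V i) = ⟨j, w⟩ := h
    cases h'
    exact Or.inl ⟨rfl, rfl⟩
  | n+1, i, x, j, w, Or.inl h => by
    cases h
    exact Or.inl ⟨rfl, reachIn_refl _ _ _⟩
  | n+1, i, x, j, w, Or.inr ⟨⟨j', y⟩, hpr, hr⟩ => by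
    rcases hpr with hT | ⟨heq, hH⟩
    · exact Or.inr ⟨j', n, hT, le_refl _, comp_proj hr⟩
    · dsimp at heq
      subst heq
      rcases comp_dichotomy n i y j w hr with ⟨h2, hH2⟩ | ⟨z, m, hz, hm, hzr⟩
      · subst h2
        exact Or.inl ⟨rfl, reachIn_head hH hH2⟩
      · exact Or.inr ⟨z, m, hz, Nat.le_succ_of_le hm, hzr⟩

lemma liftH {n : ℕ} {i : Fin t} {x y : V i} (h : ReachIn (H i) n x y) :
    ReachIn (Comp T V H) n ⟨i, x⟩ ⟨i, y⟩ := by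
  induction n generalizing x with
  | zero =>
    have hxy : x = y := h
    exact congrArg (Sigma.mk i) hxy
  | succ n ih =>
    rcases h with rfl | ⟨z, hxz, hr⟩
    · exact Or.inl rfl
    · exact Or.inr ⟨⟨i, z⟩, Or.inr ⟨rfl, hxz⟩, ih hr⟩

lemma liftT [∀ i, Nonempty (V i)] : ∀ {n : ℕ} {i j : Fin t}, i ≠ j → ReachIn T n i j →
    ∀ (x : V i) (y : V j), ReachIn (Comp T V H) n ⟨i, x⟩ ⟨j, y⟩ := by
  intro n
  induction n with
  | zero => intro i j hne h; exact absurd h hne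
  | succ n ih =>
    intro i j hne h x y
    rcases h with rfl | ⟨z, hiz, hr⟩
    · exact absurd rfl hne
    · by_cases hzj : z = j
      · subst hzj
        exact Or.inr ⟨⟨z, y⟩, Or.inl hiz, reachIn_refl _ _ _⟩
      · obtain ⟨w⟩ := (inferInstance : Nonempty (V z))
        exact Or.inr ⟨⟨z, w⟩, Or.inl hiz, ih hzj hr w y⟩

end S5

/-- For `k ≥ 2`, all vertices of a composition `Q = T[H₁,…,H_t]` are `k`-kings
if and only if for each `i`, the vertex `u_i` is a `k`-king of `T` and either all vertices of
`H_i` are `k`-kings of `H_i`, or `|V(H_i)| ≥ 2` and `u_i` lies on a directed cycle of `T` of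
length at most `k`. -/
theorem stmt5 {t : ℕ} (ht : 2 ≤ t) (V : Fin t → Type u) [∀ i, Fintype (V i)]
    [∀ i, Nonempty (V i)] (T : Fin t → Fin t → Prop) (H : ∀ i, V i → V i → Prop)
    (hTl : Loopless T) (hHl : ∀ i, Loopless (H i))
    (k : ℕ) (hk : 2 ≤ k) :
    (∀ x : Σ i, V i, IsKKing (Comp T V H) k x) ↔
      ∀ i : Fin t, IsKKing T k i ∧
        ((∀ x : V i, IsKKing (H i) k x) ∨
          (2 ≤ Fintype.card (V i) ∧
            ∃ l : List (Fin t), IsCycleList T l ∧ l.length ≤ k ∧ i ∈ l)) := by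
  constructor
  · intro h i
    constructor
    · intro j
      by_cases hij : i = j
      · subst hij; exact S5.reachIn_refl _ _ _
      · obtain ⟨x⟩ := (inferInstance : Nonempty (V i))
        obtain ⟨y⟩ := (inferInstance : Nonempty (V j))
        exact S5.comp_proj (h ⟨i, x⟩ ⟨j, y⟩)
    · by_cases hall : ∀ x : V i, IsKKing (H i) k x
      · exact Or.inl hall
      · right
        simp only [IsKKing, not_forall] at hall
        obtain ⟨x, y, hnR⟩ := hall
        have hxy : x ≠ y := fun hxy => hnR (hxy ▸ S5.reachIn_refl _ _ _)
        refine ⟨Fintype.one_lt_card_iff_nontrivial.mpr ⟨x, y, hxy⟩, ?_⟩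
        rcases S5.comp_dichotomy k i x i y (h ⟨i, x⟩ ⟨i, y⟩) with ⟨heq, hH2⟩ | ⟨z, m, hz, hm, hzr⟩
        · exact absurd hH2 hnR
        · obtain ⟨c, hcyc, hclen, hic⟩ := S5.cycle_of_closed hTl hz
            (S5.reachIn_mono (show m ≤ k - 1 by omega) hzr)
          exact ⟨c, hcyc, by omega, hic⟩
  · rintro hyp ⟨i, x⟩ ⟨j, y⟩
    obtain ⟨hking, hcase⟩ := hyp i
    by_cases hij : i = j
    · subst hij
      rcases hcase with hall | ⟨-, l, hcyc, hlk, hil⟩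
      · exact S5.liftH (hall x y)
      · obtain ⟨z, hiz, hzr⟩ := S5.closed_of_cycle hcyc hil
        have hzi : z ≠ i := fun hzi => hTl i (hzi ▸ hiz)
        have hzr' : ReachIn T (k - 1) z i :=
          S5.reachIn_mono (show l.length - 1 ≤ k - 1 by omega) hzr
        obtain ⟨w⟩ := (inferInstance : Nonempty (V z))
        have step : ReachIn (Comp T V H) (k - 1 + 1) ⟨i, x⟩ ⟨i, y⟩ :=
          S5.reachIn_head (Or.inl hiz) (S5.liftT hzi hzr' w y)
        rwa [show k - 1 + 1 = k by omega] at step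
    · exact S5.liftT hij (hking j) x y
end

section
/- Let Q = T[H_1, …, H_t] be a semicomplete composition which has a 3-king. If T has no source, then Q has at least two 3-kings. In particular, every strong semicomplete composition Q = T[H_1, …, H_t] has a 3-king, and a vertex v ∈ V(H_i) is a 3-king of Q if and only if u_i is a 3-king of T. -/
universe u v

lemma reachIn_refl_s6 {W : Type u} (A : W → W → Prop) (n : ℕ) (x : W) : ReachIn A n x x := by
  cases n with
  | zero => rfl
  | succ n => exact Or.inl rfl

lemma reachIn_mono_s6 {W : Type u} (A : W → W → Prop) {n : ℕ} {x y : W}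
    (h : ReachIn A n x y) : ReachIn A (n + 1) x y := by
  induction n generalizing x with
  | zero => exact Or.inl h
  | succ n ih =>
    rcases h with h | ⟨z, hz, hr⟩
    · exact Or.inl h
    · exact Or.inr ⟨z, hz, ih hr⟩

lemma reachIn_proj {t : ℕ} {T : Fin t → Fin t → Prop} {V : Fin t → Type u}
    {H : ∀ i, V i → V i → Prop} {n : ℕ} {x y : Σ i, V i}
    (h : ReachIn (Comp T V H) n x y) : ReachIn T n x.1 y.1 := by
  induction n generalizing x with
  | zero => exact congrArg Sigma.fst h
  | succ n ih =>
    rcases h with h | ⟨z, hz, hr⟩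
    · exact Or.inl (congrArg Sigma.fst h)
    · rcases hz with hz | ⟨he, _⟩
      · exact Or.inr ⟨z.1, hz, ih hr⟩
      · rw [he]; exact reachIn_mono_s6 _ (ih hr)

lemma reachIn_lift {t : ℕ} {T : Fin t → Fin t → Prop} {V : Fin t → Type u}
    [∀ i, Nonempty (V i)] {H : ∀ i, V i → V i → Prop} {n : ℕ} {i j : Fin t}
    (h : ReachIn T n i j) (hne : i ≠ j) (v : V i) (w : V j) :
    ReachIn (Comp T V H) n ⟨i, v⟩ ⟨j, w⟩ := by
  induction n generalizing i with
  | zero => exact absurd h hne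
  | succ n ih =>
    rcases h with h | ⟨z, hz, hr⟩
    · exact absurd h hne
    · by_cases hzj : z = j
      · subst hzj
        exact Or.inr ⟨⟨z, w⟩, Or.inl hz, reachIn_refl_s6 _ _ _⟩
      · exact Or.inr ⟨⟨z, Classical.arbitrary _⟩, Or.inl hz, ih hr hzj _⟩

/-- `i` lies on a directed cycle of length 2 or 3. -/
def ShortCycle {t : ℕ} (T : Fin t → Fin t → Prop) (i : Fin t) : Prop :=
  ∃ j, T i j ∧ (T j i ∨ ∃ l, T j l ∧ T l i)

lemma shortCycle_of {t : ℕ} {T : Fin t → Fin t → Prop} (hsc : Semicomplete T)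
    {i k : Fin t} (hki : T k i) (hik : i ≠ k) (hr : ReachIn T 3 i k) :
    ShortCycle T i := by
  have hr' : i = k ∨ ∃ z, T i z ∧ (z = k ∨ ∃ z2, T z z2 ∧
      (z2 = k ∨ ∃ z3, T z2 z3 ∧ z3 = k)) := hr
  rcases hr' with h | ⟨z, hiz, h | ⟨z2, hzz2, h | ⟨z3, hz2z3, rfl⟩⟩⟩
  · exact absurd h hik
  · subst h; exact ⟨z, hiz, Or.inl hki⟩
  · subst h; exact ⟨z, hiz, Or.inr ⟨z2, hzz2, hki⟩⟩
  · by_cases hz2i : z2 = i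
    · subst hz2i; exact ⟨z, hiz, Or.inl hzz2⟩
    · rcases hsc i z2 (Ne.symm hz2i) with h' | h'
      · exact ⟨z2, h', Or.inr ⟨z3, hz2z3, hki⟩⟩
      · exact ⟨z, hiz, Or.inr ⟨z2, hzz2, h'⟩⟩

lemma king_lift {t : ℕ} {T : Fin t → Fin t → Prop} {V : Fin t → Type u}
    [∀ i, Nonempty (V i)] {H : ∀ i, V i → V i → Prop} {i : Fin t}
    (hk : IsKKing T 3 i) (hc : ShortCycle T i) (v : V i) :
    IsKKing (Comp T V H) 3 ⟨i, v⟩ := by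
  intro y
  rcases y with ⟨j, u⟩
  by_cases hij : i = j
  · subst hij
    obtain ⟨c, hic, hcyc⟩ := hc
    rcases hcyc with hci | ⟨l, hcl, hli⟩
    · exact Or.inr ⟨⟨c, Classical.arbitrary _⟩, Or.inl hic,
        Or.inr ⟨⟨i, u⟩, Or.inl hci, Or.inl rfl⟩⟩
    · exact Or.inr ⟨⟨c, Classical.arbitrary _⟩, Or.inl hic,
        Or.inr ⟨⟨l, Classical.arbitrary _⟩, Or.inl hcl,
          Or.inr ⟨⟨i, u⟩, Or.inl hli, rfl⟩⟩⟩
  · exact reachIn_lift (hk j) hij v u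

lemma exists_near_king {t : ℕ} {T : Fin t → Fin t → Prop} (hsc : Semicomplete T)
    (hTl : Loopless T) (hns : ∀ i, ∃ j, T j i) (i0 : Fin t) :
    ∃ j, T j i0 ∧ IsKKing T 2 j := by
  classical
  set S : Finset (Fin t) := Finset.univ.filter (fun j => T j i0) with hSdef
  have hS : S.Nonempty := by
    obtain ⟨j, hj⟩ := hns i0
    exact ⟨j, by simp [hSdef, hj]⟩
  obtain ⟨j, hjS, hmax⟩ :=
    S.exists_max_image (fun j => (S.filter (fun z => T j z)).card) hS
  have hj0 : T j i0 := by simpa [hSdef] using hjS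
  refine ⟨j, hj0, ?_⟩
  intro y
  by_cases hyj : y = j
  · subst hyj; exact reachIn_refl_s6 _ _ _
  by_cases hy0 : y = i0
  · subst hy0; exact Or.inr ⟨y, hj0, Or.inl rfl⟩
  by_cases hyS : T y i0
  · by_cases hjy : T j y
    · exact Or.inr ⟨y, hjy, Or.inl rfl⟩
    by_cases h2 : ∃ z, T j z ∧ T z y
    · obtain ⟨z, h1, h2⟩ := h2
      exact Or.inr ⟨z, h1, Or.inr ⟨y, h2, rfl⟩⟩
    push_neg at h2
    exfalso
    have hyj' : T y j := (hsc j y (Ne.symm hyj)).resolve_left hjy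
    have hsub : insert j (S.filter (fun z => T j z)) ⊆ S.filter (fun z => T y z) := by
      intro z hz
      rcases Finset.mem_insert.mp hz with rfl | hz
      · simp [hSdef, hj0, hyj']
      · simp only [Finset.mem_filter] at hz ⊢
        refine ⟨hz.1, ?_⟩
        have hzy : z ≠ y := by rintro rfl; exact hjy hz.2
        exact (hsc z y hzy).resolve_left (h2 z hz.2)
    have hjnot : j ∉ S.filter (fun z => T j z) := by simp [hTl j]
    have hcard := Finset.card_le_card hsub
    rw [Finset.card_insert_of_notMem hjnot] at hcard
    have hle := hmax y (by simp [hSdef, hyS])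
    omega
  · have h0y : T i0 y := (hsc i0 y (Ne.symm hy0)).resolve_right hyS
    exact Or.inr ⟨i0, hj0, Or.inr ⟨y, h0y, rfl⟩⟩

lemma no_source_of_strong {t : ℕ} {T : Fin t → Fin t → Prop} {V : Fin t → Type u}
    [∀ i, Nonempty (V i)] {H : ∀ i, V i → V i → Prop}
    (ht : 2 ≤ t) (hs : IsStrong (Comp T V H)) : ∀ i, ∃ k, T k i := by
  intro i
  have hcard : 1 < Fintype.card (Fin t) := by rw [Fintype.card_fin]; omega
  obtain ⟨j, hj⟩ := Fintype.exists_ne_of_one_lt_card hcard i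
  have hpath := hs ⟨j, Classical.arbitrary _⟩ ⟨i, Classical.arbitrary _⟩
  suffices h : ∀ (p q : Σ i, V i), Relation.ReflTransGen (Comp T V H) p q →
      p.1 ≠ q.1 → ∃ k, T k q.1 by
    exact h _ _ hpath hj
  intro p q hpq
  induction hpq with
  | refl => intro h; exact absurd rfl h
  | @tail c q' hpc hcq ih =>
    intro hne
    rcases hcq with h | ⟨he, _⟩
    · exact ⟨_, h⟩
    · rw [← he]
      exact ih (fun hc => hne (hc.trans he))

/-- Let `Q = T[H₁,…,H_t]` be a semicomplete composition. If `T` has no source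
and `Q` has a 3-king, then `Q` has at least two 3-kings. In particular, if `Q` is strong then
`Q` has a 3-king and a vertex of `H_i` is a 3-king of `Q` iff `u_i` is a 3-king of `T`. -/
theorem stmt6 {t : ℕ} (ht : 2 ≤ t) (V : Fin t → Type u) [∀ i, Fintype (V i)]
    [∀ i, Nonempty (V i)] (T : Fin t → Fin t → Prop) (H : ∀ i, V i → V i → Prop)
    (hTl : Loopless T) (hHl : ∀ i, Loopless (H i)) (hsc : Semicomplete T) :
    ((∀ i : Fin t, ∃ j, T j i) → (∃ x : Σ i, V i, IsKKing (Comp T V H) 3 x) →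
      ∃ x y : Σ i, V i, x ≠ y ∧ IsKKing (Comp T V H) 3 x ∧ IsKKing (Comp T V H) 3 y) ∧
    (IsStrong (Comp T V H) →
      (∃ x : Σ i, V i, IsKKing (Comp T V H) 3 x) ∧
      ∀ (i : Fin t) (v : V i), IsKKing (Comp T V H) 3 ⟨i, v⟩ ↔ IsKKing T 3 i) := by
  constructor
  · rintro hns ⟨⟨i, v⟩, hx⟩
    obtain ⟨j, hji, hjking⟩ := exists_near_king hsc hTl hns i
    have hij : j ≠ i := fun h => hTl i (h ▸ hji)
    obtain ⟨m, hmj⟩ := hns j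
    have hc : ShortCycle T j :=
      shortCycle_of hsc hmj (fun h => hTl j (h ▸ hmj)) (reachIn_mono_s6 _ (hjking m))
    have hking : IsKKing (Comp T V H) 3 ⟨j, Classical.arbitrary (V j)⟩ :=
      king_lift (fun y => reachIn_mono_s6 _ (hjking y)) hc _
    refine ⟨⟨i, v⟩, ⟨j, Classical.arbitrary _⟩, ?_, hx, hking⟩
    intro h
    exact hij (congrArg Sigma.fst h).symm
  · intro hstrong
    have hns : ∀ i, ∃ k, T k i := no_source_of_strong ht hstrong
    have main : ∀ (i : Fin t) (v : V i), IsKKing T 3 i →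
        IsKKing (Comp T V H) 3 ⟨i, v⟩ := by
      intro i v hk
      obtain ⟨k, hki⟩ := hns i
      have hik : i ≠ k := fun h => hTl i (h ▸ hki)
      exact king_lift hk (shortCycle_of hsc hki hik (hk k)) v
    constructor
    · obtain ⟨j, _, hjk⟩ := exists_near_king hsc hTl hns ⟨0, by omega⟩
      exact ⟨⟨j, Classical.arbitrary _⟩,
        main j _ (fun y => reachIn_mono_s6 _ (hjk y))⟩
    · intro i v
      constructor
      · intro hq j
        by_cases hij : i = j
        · subst hij; exact reachIn_refl_s6 _ _ _
        · exact reachIn_proj (hq ⟨j, Classical.arbitrary _⟩)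
      · exact main i v
end

section
/- Let Q = T[H_1, …, H_t] be a semicomplete composition such that T has no sink. Then Q contains a pair of disjoint quasi-kernels. In particular, every strong semicomplete composition contains a pair of disjoint quasi-kernels. -/
universe u v

/-- A set of vertices is independent if it spans no arc. -/
def IsIndepSet {V : Type u} (A : V → V → Prop) (K : Set V) : Prop :=
  ∀ x ∈ K, ∀ y ∈ K, ¬ A x y

/-- A quasi-kernel: an independent set `K` such that every vertex outside `K` reaches `K`
by a path of length at most two. -/
def IsQuasiKernel {V : Type u} (A : V → V → Prop) (K : Set V) : Prop :=
  IsIndepSet A K ∧ ∀ x ∉ K,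
    (∃ z ∈ K, A x z) ∨ (∃ y ∉ K, ∃ z ∈ K, A x y ∧ A y z)


section QKAux

variable {t : ℕ}

/-- Chvátal–Lovász on a finite vertex set, by strong induction: remove the
closed in-neighbourhood of a vertex `v` and extend a quasi-kernel of the rest. -/
lemma qkAux_finset {α : Type u} (A : α → α → Prop) (hl : Loopless A) (s : Finset α) :
    ∃ K : Set α, (∀ x ∈ K, x ∈ s) ∧ (∀ x ∈ K, ∀ y ∈ K, ¬ A x y) ∧
      ∀ x ∈ s, x ∉ K → (∃ z ∈ K, A x z) ∨
        (∃ y, y ∈ s ∧ y ∉ K ∧ ∃ z ∈ K, A x y ∧ A y z) := by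
  classical
  induction s using Finset.strongInduction with
  | _ s ih =>
    rcases s.eq_empty_or_nonempty with rfl | ⟨v, hv⟩
    · exact ⟨∅, by simp, by simp, by simp⟩
    · have hss : s.filter (fun u => u ≠ v ∧ ¬ A u v) ⊂ s :=
        Finset.filter_ssubset.mpr ⟨v, hv, by simp⟩
      obtain ⟨K, hKs, hKind, hKcov⟩ := ih _ hss
      have hvs' : v ∉ s.filter (fun u => u ≠ v ∧ ¬ A u v) := by simp
      have hKs'' : ∀ x ∈ K, x ≠ v ∧ ¬ A x v := by
        intro x hx
        have := hKs x hx
        simp only [Finset.mem_filter] at this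
        exact this.2
      by_cases hvq : ∃ q ∈ K, A v q
      · obtain ⟨q, hqK, hAvq⟩ := hvq
        refine ⟨K, fun x hx => (Finset.mem_filter.mp (hKs x hx)).1, hKind, ?_⟩
        intro x hxs hxK
        by_cases hxs' : x ∈ s.filter (fun u => u ≠ v ∧ ¬ A u v)
        · rcases hKcov x hxs' hxK with h | ⟨y, hy1, hy2, rest⟩
          · exact Or.inl h
          · exact Or.inr ⟨y, (Finset.mem_filter.mp hy1).1, hy2, rest⟩
        · by_cases hxv : x = v
          · subst hxv; exact Or.inl ⟨q, hqK, hAvq⟩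
          · have hAxv : A x v := by
              by_contra hA
              exact hxs' (Finset.mem_filter.mpr ⟨hxs, hxv, hA⟩)
            have hvK : v ∉ K := fun h => (hKs'' v h).1 rfl
            exact Or.inr ⟨v, hv, hvK, q, hqK, hAxv, hAvq⟩
      · push_neg at hvq
        have hvK : v ∉ K := fun h => (hKs'' v h).1 rfl
        refine ⟨insert v K, ?_, ?_, ?_⟩
        · rintro x hx
          rcases hx with rfl | hx
          · exact hv
          · exact (Finset.mem_filter.mp (hKs x hx)).1
        · rintro x hx y hy
          rcases hx with rfl | hx
          · rcases hy with rfl | hy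
            · exact hl _
            · exact hvq _ hy
          · rcases hy with rfl | hy
            · exact (hKs'' x hx).2
            · exact hKind x hx y hy
        · intro x hxs hxK
          have hxv : x ≠ v := fun h => hxK (h ▸ Set.mem_insert v K)
          have hxK' : x ∉ K := fun h => hxK (Set.mem_insert_of_mem v h)
          by_cases hxs' : x ∈ s.filter (fun u => u ≠ v ∧ ¬ A u v)
          · rcases hKcov x hxs' hxK' with ⟨z, hz, hAz⟩ | ⟨y, hy1, hy2, z, hz, rest⟩
            · exact Or.inl ⟨z, Set.mem_insert_of_mem v hz, hAz⟩
            · have hyv : y ≠ v := fun h => hvs' (h ▸ hy1)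
              exact Or.inr ⟨y, (Finset.mem_filter.mp hy1).1,
                fun h => h.elim (fun h => hyv h) hy2, z, Set.mem_insert_of_mem v hz, rest⟩
          · have hAxv : A x v := by
              by_contra hA
              exact hxs' (Finset.mem_filter.mpr ⟨hxs, hxv, hA⟩)
            exact Or.inl ⟨v, Set.mem_insert v K, hAxv⟩

variable {T : Fin t → Fin t → Prop}

/-- In a semicomplete loopless digraph, every nonempty vertex set contains a
vertex (one of maximum in-degree inside the set) that is reached within two
steps (inside the set) from every other vertex of the set. -/
lemma qkAux_exists_good_in (hTl : Loopless T) (hsc : Semicomplete T)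
    (s : Finset (Fin t)) (hs : s.Nonempty) :
    ∃ u ∈ s, ∀ p ∈ s, p ≠ u → T p u ∨ ∃ q ∈ s, T p q ∧ T q u := by
  classical
  obtain ⟨u, hu, hmax⟩ := s.exists_max_image (fun w => (s.filter (fun q => T q w)).card) hs
  refine ⟨u, hu, ?_⟩
  intro p hp hpu
  by_contra hcon
  push_neg at hcon
  obtain ⟨hnTpu, h2⟩ := hcon
  have hsub : insert u (s.filter (fun q => T q u)) ⊆ s.filter (fun q => T q p) := by
    intro q hq
    rcases Finset.mem_insert.mp hq with rfl | hq
    · refine Finset.mem_filter.mpr ⟨hu, ?_⟩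
      rcases hsc p q hpu with h | h
      · exact absurd h hnTpu
      · exact h
    · obtain ⟨hqs, hTqu⟩ := Finset.mem_filter.mp hq
      refine Finset.mem_filter.mpr ⟨hqs, ?_⟩
      have hqp : q ≠ p := fun h => hnTpu (h ▸ hTqu)
      rcases hsc p q (Ne.symm hqp) with h | h
      · exact absurd hTqu (h2 q hqs h)
      · exact h
  have hun : u ∉ s.filter (fun q => T q u) := by
    simp [hTl u]
  have : (s.filter (fun q => T q u)).card + 1 ≤ (s.filter (fun q => T q p)).card := by
    rw [← Finset.card_insert_of_notMem hun]
    exact Finset.card_le_card hsub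
  have := hmax p hp
  omega

/-- A semicomplete loopless digraph on at least two vertices with no sink has
two distinct vertices each of which is reached within two steps by all others. -/
lemma qkAux_two_good (ht : 2 ≤ t) (hTl : Loopless T) (hsc : Semicomplete T)
    (hns : ∀ i, ∃ j, T i j) :
    ∃ i j : Fin t, i ≠ j ∧
      (∀ p, p ≠ i → T p i ∨ ∃ q, T p q ∧ T q i) ∧
      (∀ p, p ≠ j → T p j ∨ ∃ q, T p q ∧ T q j) := by
  classical
  have ht0 : 0 < t := by omega
  by_cases hdom : ∃ v, ∀ p, p ≠ v → T p v
  · obtain ⟨v, hv⟩ := hdom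
    obtain ⟨q, hvq⟩ := hns v
    have hvq' : v ≠ q := fun h => hTl v (h ▸ hvq)
    refine ⟨v, q, hvq', fun p hp => Or.inl (hv p hp), ?_⟩
    intro p hp
    by_cases hpv : p = v
    · exact Or.inl (hpv ▸ hvq)
    · exact Or.inr ⟨v, hv p hpv, hvq⟩
  · push_neg at hdom
    obtain ⟨v, hv, hvgood⟩ := qkAux_exists_good_in hTl hsc Finset.univ ⟨⟨0, ht0⟩, Finset.mem_univ _⟩
    obtain ⟨w, hwv, hnTwv⟩ := hdom v
    set s : Finset (Fin t) := Finset.univ.filter (fun x => x ≠ v ∧ ¬ T x v) with hs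
    have hws : w ∈ s := by simp [hs, hwv, hnTwv]
    obtain ⟨u, hu, hugood⟩ := qkAux_exists_good_in hTl hsc s ⟨w, hws⟩
    obtain ⟨huv, hnTuv⟩ : u ≠ v ∧ ¬ T u v := by simpa [hs] using hu
    refine ⟨v, u, Ne.symm huv, fun p hp => by simpa using hvgood p (Finset.mem_univ p) hp, ?_⟩
    have hTvu : T v u := by
      rcases hsc u v huv with h | h
      · exact absurd h hnTuv
      · exact h
    intro p hp
    by_cases hpv : p = v
    · exact Or.inl (hpv ▸ hTvu)
    · by_cases hps : p ∈ s
      · rcases hugood p hps hp with h | ⟨q, _, hq⟩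
        · exact Or.inl h
        · exact Or.inr ⟨q, hq⟩
      · have hTpv : T p v := by
          by_contra hA
          exact hps (by simp [hs, hpv, hA])
        exact Or.inr ⟨v, hTpv, hTvu⟩

variable {V : Fin t → Type u} {H : ∀ i, V i → V i → Prop}

/-- Lifting a quasi-kernel of `H i` to a quasi-kernel of the composition,
when `i` is reached within two steps (in `T`) by every other vertex of `T`. -/
lemma qkAux_lift [∀ i, Fintype (V i)] [∀ i, Nonempty (V i)]
    (hTl : Loopless T) (hHl : ∀ i, Loopless (H i))
    (i : Fin t) (hgood : ∀ p, p ≠ i → T p i ∨ ∃ q, T p q ∧ T q i) :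
    ∃ K : Set (Σ i, V i), IsQuasiKernel (Comp T V H) K ∧ ∀ x ∈ K, x.1 = i := by
  classical
  obtain ⟨K₀, _, hind, hcov⟩ := qkAux_finset (H i) (hHl i) Finset.univ
  have hne : ∃ a, a ∈ K₀ := by
    obtain ⟨a⟩ := (inferInstance : Nonempty (V i))
    by_cases h : a ∈ K₀
    · exact ⟨a, h⟩
    · rcases hcov a (Finset.mem_univ a) h with ⟨z, hz, -⟩ | ⟨y, -, -, z, hz, -⟩
      · exact ⟨z, hz⟩
      · exact ⟨z, hz⟩
  obtain ⟨a₀, ha₀⟩ := hne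
  refine ⟨Sigma.mk i '' K₀, ⟨?_, ?_⟩, ?_⟩
  · rintro x ⟨a, ha, rfl⟩ y ⟨b, hb, rfl⟩ harc
    rcases harc with hT | ⟨h, hH⟩
    · exact hTl i hT
    · exact hind a ha b hb hH
  · rintro ⟨p, b⟩ hx
    by_cases hpi : p = i
    · subst hpi
      have hbK : b ∉ K₀ := fun h => hx ⟨b, h, rfl⟩
      rcases hcov b (Finset.mem_univ b) hbK with ⟨z, hz, hA⟩ | ⟨y, -, hyK, z, hz, hA1, hA2⟩
      · exact Or.inl ⟨⟨p, z⟩, ⟨z, hz, rfl⟩, Or.inr ⟨rfl, hA⟩⟩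
      · refine Or.inr ⟨⟨p, y⟩, ?_, ⟨p, z⟩, ⟨z, hz, rfl⟩, Or.inr ⟨rfl, hA1⟩, Or.inr ⟨rfl, hA2⟩⟩
        rintro ⟨c, hc, heq⟩
        have : c = y := by simpa using heq
        exact hyK (this ▸ hc)
    · rcases hgood p hpi with hT | ⟨q, hTpq, hTqi⟩
      · exact Or.inl ⟨⟨i, a₀⟩, ⟨a₀, ha₀, rfl⟩, Or.inl hT⟩
      · have hqi : q ≠ i := fun h => hTl i (h ▸ hTqi)
        obtain ⟨c⟩ := (inferInstance : Nonempty (V q))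
        refine Or.inr ⟨⟨q, c⟩, ?_, ⟨i, a₀⟩, ⟨a₀, ha₀, rfl⟩, Or.inl hTpq, Or.inl hTqi⟩
        rintro ⟨d, hd, heq⟩
        exact hqi (congrArg Sigma.fst heq).symm
  · rintro x ⟨a, -, rfl⟩
    rfl

/-- Along a walk in the composition whose endpoints lie in different
components, the first component has an out-arc in `T`. -/
lemma qkAux_reach {x y : Σ i, V i}
    (hxy : Relation.ReflTransGen (Comp T V H) x y) :
    x.1 ≠ y.1 → ∃ j, T x.1 j := by
  induction hxy using Relation.ReflTransGen.head_induction_on with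
  | refl => exact fun h => absurd rfl h
  | head harc _ ih =>
      intro hne
      rcases harc with hT | ⟨h, -⟩
      · exact ⟨_, hT⟩
      · rw [h]
        exact ih (h ▸ hne)

end QKAux

/-- A semicomplete composition whose `T` has no sink contains a pair of
disjoint quasi-kernels; in particular this holds for every strong semicomplete
composition. -/
theorem stmt9 {t : ℕ} (ht : 2 ≤ t) (V : Fin t → Type u) [∀ i, Fintype (V i)]
    [∀ i, Nonempty (V i)] (T : Fin t → Fin t → Prop) (H : ∀ i, V i → V i → Prop)
    (hTl : Loopless T) (hHl : ∀ i, Loopless (H i)) (hsc : Semicomplete T) :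
    ((∀ i : Fin t, ∃ j, T i j) →
      ∃ K₁ K₂ : Set (Σ i, V i), IsQuasiKernel (Comp T V H) K₁ ∧
        IsQuasiKernel (Comp T V H) K₂ ∧ Disjoint K₁ K₂) ∧
    (IsStrong (Comp T V H) →
      ∃ K₁ K₂ : Set (Σ i, V i), IsQuasiKernel (Comp T V H) K₁ ∧
        IsQuasiKernel (Comp T V H) K₂ ∧ Disjoint K₁ K₂) := by
  have main : (∀ i : Fin t, ∃ j, T i j) →
      ∃ K₁ K₂ : Set (Σ i, V i), IsQuasiKernel (Comp T V H) K₁ ∧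
        IsQuasiKernel (Comp T V H) K₂ ∧ Disjoint K₁ K₂ := by
    intro hns
    obtain ⟨i, j, hij, hgi, hgj⟩ := qkAux_two_good ht hTl hsc hns
    obtain ⟨K₁, hK₁, hK₁i⟩ := qkAux_lift (V := V) (H := H) hTl hHl i hgi
    obtain ⟨K₂, hK₂, hK₂j⟩ := qkAux_lift (V := V) (H := H) hTl hHl j hgj
    refine ⟨K₁, K₂, hK₁, hK₂, Set.disjoint_left.mpr ?_⟩
    intro x h1 h2
    exact hij ((hK₁i x h1).symm.trans (hK₂j x h2))
  refine ⟨main, fun hstrong => main ?_⟩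
  intro i
  haveI : Nontrivial (Fin t) := Fin.nontrivial_iff_two_le.mpr ht
  obtain ⟨i', hi'⟩ := exists_ne i
  obtain ⟨a⟩ := (inferInstance : Nonempty (V i))
  obtain ⟨b⟩ := (inferInstance : Nonempty (V i'))
  exact qkAux_reach (hstrong ⟨i, a⟩ ⟨i', b⟩) (Ne.symm hi')
end
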